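/- arXiv:0910.2393 — 5 statements merged into one kernel-verified Lean document; each statement's English description precedes it below -/
import Mathlib

section
/- Let H be a complex Hilbert space and let S, T be closed subspaces of H. If e_H(ψ, S) = e_H(ψ, T) for every nonzero vector ψ ∈ H, then S = T. (Extensionality of the quantum Chu space.) -/
/-- The quantum evaluation `e_H(ψ, S) = ‖P_S ψ‖² / ‖ψ‖²` for a closed subspace `S`
of a complex Hilbert space `H`. -/
noncomputable def qeval {H : Type*} [NormedAddCommGroup H] [InnerProductSpace ℂ H]
    [CompleteSpace H] (ψ : H) (S : Submodule ℂ H) (hS : IsClosed (S : Set H)) : ℝ :=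
  letI : CompleteSpace S := hS.completeSpace_coe
  ‖(Submodule.orthogonalProjectionOnto S ψ : H)‖ ^ 2 / ‖ψ‖ ^ 2

/-- Extensionality of the quantum Chu space: if two closed subspaces `S`, `T` of a complex
Hilbert space have the same evaluation on every nonzero vector, they are equal. -/
theorem qeval_extensional {H : Type*} [NormedAddCommGroup H] [InnerProductSpace ℂ H]
    [CompleteSpace H] (S T : Submodule ℂ H)
    (hS : IsClosed (S : Set H)) (hT : IsClosed (T : Set H))
    (h : ∀ ψ : H, ψ ≠ 0 → qeval ψ S hS = qeval ψ T hT) :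
    S = T := by
  letI : CompleteSpace S := hS.completeSpace_coe
  letI : CompleteSpace T := hT.completeSpace_coe
  have key : ∀ (U V : Submodule ℂ H) [CompleteSpace U] [CompleteSpace V],
      (∀ ψ : H, ψ ≠ 0 →
        ‖(Submodule.orthogonalProjectionOnto U ψ : H)‖ ^ 2 / ‖ψ‖ ^ 2
          = ‖(Submodule.orthogonalProjectionOnto V ψ : H)‖ ^ 2 / ‖ψ‖ ^ 2) → U ≤ V := by
    intro U V _ _ hUV ψ hψU
    by_cases hz : ψ = 0
    · simpa [hz] using V.zero_mem
    have hψ0 : ψ ≠ 0 := hz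
    have hnorm : (0:ℝ) < ‖ψ‖ ^ 2 := by have := norm_pos_iff.mpr hψ0; positivity
    have hPU : (Submodule.orthogonalProjectionOnto U ψ : H) = ψ :=
      Submodule.starProjection_eq_self_iff.mpr hψU
    have heq := hUV ψ hz
    rw [hPU, div_eq_div_iff hnorm.ne' hnorm.ne'] at heq
    have heq2 := mul_right_cancel₀ hnorm.ne' heq
    have hdecomp := Submodule.norm_sq_eq_add_norm_sq_projection ψ V
    have hperp : ‖(Submodule.orthogonalProjectionOnto Vᗮ ψ : H)‖ ^ 2 = 0 := by
      have := Submodule.norm_sq_eq_add_norm_sq_projection ψ V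
      simp only [Submodule.norm_coe] at heq2 this ⊢
      linarith
    have hperp0 : (Submodule.orthogonalProjectionOnto Vᗮ ψ : H) = 0 := by
      simpa using pow_eq_zero_iff (n := 2) (by norm_num) |>.mp
        (by simpa using hperp) |> norm_eq_zero.mp
    have hsum := congrArg (fun f => f ψ)
      (Submodule.id_eq_sum_starProjection_self_orthogonalComplement (K := V))
    simp only [ContinuousLinearMap.id_apply, ContinuousLinearMap.add_apply,
      ContinuousLinearMap.comp_apply] at hsum
    have : ψ = (Submodule.orthogonalProjectionOnto V ψ : H) := by
      simp only [Submodule.starProjection_apply, hperp0, add_zero] at hsum; exact hsum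
    rw [this]
    exact (Submodule.orthogonalProjectionOnto V ψ).2
  have h' : ∀ ψ : H, ψ ≠ 0 →
      ‖(Submodule.orthogonalProjectionOnto S ψ : H)‖ ^ 2 / ‖ψ‖ ^ 2
        = ‖(Submodule.orthogonalProjectionOnto T ψ : H)‖ ^ 2 / ‖ψ‖ ^ 2 := fun ψ hψ => h ψ hψ
  exact le_antisymm (key S T h') (key T S fun ψ hψ => (h' ψ hψ).symm)
end

section
/- Let (f_*, f^*) be a Chu morphism of biextensional quantum Chu spaces from H to K. For a closed subspace S of H define f→(S) to be the topological closure of the linear span of all representatives of f_*([ψ]) for nonzero ψ ∈ S. Then f→ is left adjoint to f^*: for every closed subspace S of H and every closed subspace T of K, f→(S) ⊆ T if and only if S ⊆ f^*(T). -/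
/-- The direct image `f→(S)`: the topological closure of the linear span of all
representatives of the rays `f₁ [ψ]` for nonzero `ψ ∈ S`. -/
noncomputable def chuDirImage {H K : Type*}
    [NormedAddCommGroup H] [InnerProductSpace ℂ H]
    [NormedAddCommGroup K] [InnerProductSpace ℂ K]
    (f₁ : Projectivization ℂ H → Projectivization ℂ K) (S : Submodule ℂ H) :
    Submodule ℂ K :=
  (Submodule.span ℂ {χ : K | ∃ (ψ : H) (hψ : ψ ≠ 0) (_ : ψ ∈ S) (hχ : χ ≠ 0),
      Projectivization.mk ℂ χ hχ = f₁ (Projectivization.mk ℂ ψ hψ)}).topologicalClosure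

lemma mem_iff_qeval_one {H : Type*} [NormedAddCommGroup H] [InnerProductSpace ℂ H]
    [CompleteSpace H] (ψ : H) (hψ : ψ ≠ 0) (S : Submodule ℂ H)
    (hS : IsClosed (S : Set H)) :
    ψ ∈ S ↔ qeval ψ S hS = 1 := by
  letI : CompleteSpace S := hS.completeSpace_coe
  have hn : (0:ℝ) < ‖ψ‖ := norm_pos_iff.2 hψ
  have hne : ‖ψ‖ ^ 2 ≠ 0 := by positivity
  unfold qeval
  constructor
  · intro h
    rw [show (S.orthogonalProjectionOnto ψ : H) = ψ from Submodule.starProjection_eq_self_iff.2 h, div_self hne]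
  · intro h
    have h2 : ‖(S.orthogonalProjectionOnto ψ : H)‖ ^ 2 = ‖ψ‖ ^ 2 :=
      (div_eq_one_iff_eq hne).1 h
    have hsum := Submodule.norm_sq_eq_add_norm_sq_projection ψ S
    simp only [Submodule.norm_coe] at hsum h2
    have h3 : ‖(Sᗮ.orthogonalProjectionOnto ψ)‖ ^ 2 = 0 := by linarith
    have h0 : (Sᗮ.orthogonalProjectionOnto ψ : H) = 0 := by
      have h4 : Sᗮ.orthogonalProjectionOnto ψ = 0 :=
        norm_eq_zero.1 ((pow_eq_zero_iff (two_ne_zero)).1 h3)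
      rw [h4]; rfl
    have hdec : (S.orthogonalProjectionOnto ψ : H) + (Sᗮ.orthogonalProjectionOnto ψ : H) = ψ := Submodule.starProjection_add_starProjection_orthogonal (K := S) ψ
    rw [h0, add_zero] at hdec
    rw [← hdec]; exact (S.orthogonalProjectionOnto ψ).2


/-- Let `(f₁, f₂)` be a Chu morphism of biextensional quantum Chu spaces from `H` to `K`.
Then `f→` is left adjoint to `f₂`: for closed subspaces `S` of `H` and `T` of `K`,
`f→(S) ⊆ T` iff `S ⊆ f₂ T`. -/
theorem chu_dirImage_adjoint
    {H K : Type*} [NormedAddCommGroup H] [InnerProductSpace ℂ H] [CompleteSpace H]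
    [NormedAddCommGroup K] [InnerProductSpace ℂ K] [CompleteSpace K]
    (f₁ : Projectivization ℂ H → Projectivization ℂ K)
    (f₂ : {S : Submodule ℂ K // IsClosed (S : Set K)} →
          {S : Submodule ℂ H // IsClosed (S : Set H)})
    (hchu : ∀ (ψ : H) (hψ : ψ ≠ 0) (S : {S : Submodule ℂ K // IsClosed (S : Set K)})
      (φ : K) (hφ : φ ≠ 0), Projectivization.mk ℂ φ hφ = f₁ (Projectivization.mk ℂ ψ hψ) →
      qeval ψ (f₂ S).1 (f₂ S).2 = qeval φ S.1 S.2) :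
    ∀ (S : Submodule ℂ H) (_ : IsClosed (S : Set H))
      (T : {T : Submodule ℂ K // IsClosed (T : Set K)}),
      chuDirImage f₁ S ≤ T.1 ↔ S ≤ (f₂ T).1 := by
  
  intro S hSc T
  constructor
  · intro hle ψ hψS
    by_cases hψ : ψ = 0
    · simp only [hψ]; exact (f₂ T).1.zero_mem
    · set φr := (f₁ (Projectivization.mk ℂ ψ hψ)).rep with hφr
      have hφne : φr ≠ 0 := (f₁ (Projectivization.mk ℂ ψ hψ)).rep_nonzero
      have hmk : Projectivization.mk ℂ φr hφne = f₁ (Projectivization.mk ℂ ψ hψ) :=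
        (f₁ (Projectivization.mk ℂ ψ hψ)).mk_rep
      have hφT : φr ∈ T.1 := by
        apply hle
        apply Submodule.le_topologicalClosure
        apply Submodule.subset_span
        exact ⟨ψ, hψ, hψS, hφne, hmk⟩
      have := hchu ψ hψ T φr hφne hmk
      rw [(mem_iff_qeval_one ψ hψ (f₂ T).1 (f₂ T).2), this]
      exact (mem_iff_qeval_one φr hφne T.1 T.2).1 hφT
  · intro hle
    apply Submodule.topologicalClosure_minimal
    · rw [Submodule.span_le]
      rintro χ ⟨ψ, hψ, hψS, hχ, hmk⟩
      have hψT : ψ ∈ (f₂ T).1 := hle hψS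
      have := hchu ψ hψ T χ hχ hmk
      show χ ∈ T.1
      rw [mem_iff_qeval_one χ hχ T.1 T.2, ← this]
      exact (mem_iff_qeval_one ψ hψ (f₂ T).1 (f₂ T).2).1 hψT
    · exact T.2
end

section
/- Let H and K be complex Hilbert spaces and let U, V : H → K be either both unitary or both antiunitary. If U and V induce the same map on rays, i.e. for every ψ ∈ H there exists μ ∈ ℂ with U ψ = μ • V ψ, then there exists λ ∈ ℂ with |λ| = 1 such that U ψ = λ • V ψ for all ψ ∈ H. (A semiunitary map is determined by its projective action up to a phase.) -/
lemma eigen_const {H : Type*} [AddCommGroup H] [Module ℂ H] (f : H →ₗ[ℂ] H)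
    (h : ∀ x, ∃ μ : ℂ, f x = μ • x) : ∃ c : ℂ, ∀ x, f x = c • x := by
  by_cases hH : ∀ x : H, x = 0
  · exact ⟨1, fun x => by rw [hH x]; simp⟩
  push_neg at hH
  obtain ⟨x₀, hx₀⟩ := hH
  obtain ⟨μ₀, hμ₀⟩ := h x₀
  refine ⟨μ₀, fun x => ?_⟩
  by_cases hx : ∃ c : ℂ, x = c • x₀
  · obtain ⟨c, rfl⟩ := hx
    rw [map_smul, hμ₀, smul_comm]
  · obtain ⟨μ, hμ⟩ := h x
    obtain ⟨ν, hν⟩ := h (x + x₀)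
    have key : (ν - μ) • x = (μ₀ - ν) • x₀ := by
      have := hν
      rw [map_add, hμ, hμ₀, smul_add] at this
      rw [sub_smul, sub_smul]
      linear_combination (norm := module) -this
    have hνμ : ν = μ := by
      by_contra hne
      refine hx ⟨(ν - μ)⁻¹ * (μ₀ - ν), ?_⟩
      rw [← smul_smul, ← key, inv_smul_smul₀ (sub_ne_zero.mpr hne)]
    have : μ₀ = μ := by
      rw [hνμ, sub_self, zero_smul] at key
      exact sub_eq_zero.mp ((smul_eq_zero.mp key.symm).resolve_right hx₀)
    rw [hμ, this]

/-- A semiunitary map (unitary `H ≃ₗᵢ[ℂ] K` or antiunitary `H ≃ₛₗᵢ[starRingEnd ℂ] K`)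
is determined by its action on rays up to a global phase: if `U` and `V` are both unitary,
or both antiunitary, and `U ψ` is a scalar multiple of `V ψ` for every `ψ`, then there is a
single `λ ∈ ℂ` with `|λ| = 1` such that `U ψ = λ • V ψ` for all `ψ`. -/
theorem semiunitary_projective_determines_up_to_phase
    {H K : Type*} [NormedAddCommGroup H] [InnerProductSpace ℂ H] [CompleteSpace H]
    [NormedAddCommGroup K] [InnerProductSpace ℂ K] [CompleteSpace K] :
    (∀ U V : H ≃ₗᵢ[ℂ] K, (∀ ψ : H, ∃ μ : ℂ, U ψ = μ • V ψ) →
      ∃ lam : ℂ, ‖lam‖ = 1 ∧ ∀ ψ : H, U ψ = lam • V ψ) ∧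
    (∀ U V : H ≃ₛₗᵢ[starRingEnd ℂ] K, (∀ ψ : H, ∃ μ : ℂ, U ψ = μ • V ψ) →
      ∃ lam : ℂ, ‖lam‖ = 1 ∧ ∀ ψ : H, U ψ = lam • V ψ) := by
  constructor
  · intro U V hUV
    by_cases htriv : ∀ ψ : H, ψ = 0
    · exact ⟨1, by simp, fun ψ => by rw [htriv ψ]; simp⟩
    push_neg at htriv
    obtain ⟨ψ₀, hψ₀⟩ := htriv
    let f : H →ₗ[ℂ] H :=
      { toFun := fun x => V.symm (U x)
        map_add' := fun x y => by simp
        map_smul' := fun c x => by simp }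
    have hf : ∀ x, ∃ μ : ℂ, f x = μ • x := fun x => by
      obtain ⟨μ, hμ⟩ := hUV x
      exact ⟨μ, by simp [f, hμ]⟩
    obtain ⟨c, hc⟩ := eigen_const f hf
    have hUVc : ∀ ψ : H, U ψ = c • V ψ := fun ψ => by
      have h1 : V.symm (U ψ) = c • ψ := hc ψ
      have h2 : U ψ = V (c • ψ) := by rw [← h1]; simp
      rw [h2, map_smul]
    refine ⟨c, ?_, hUVc⟩
    have h1 : ‖U ψ₀‖ = ‖ψ₀‖ := U.norm_map ψ₀
    rw [hUVc ψ₀, norm_smul, V.norm_map] at h1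
    exact mul_right_cancel₀ (norm_ne_zero_iff.mpr hψ₀) (h1.trans (one_mul ‖ψ₀‖).symm)
  · intro U V hUV
    by_cases htriv : ∀ ψ : H, ψ = 0
    · exact ⟨1, by simp, fun ψ => by rw [htriv ψ]; simp⟩
    push_neg at htriv
    obtain ⟨ψ₀, hψ₀⟩ := htriv
    let f : H →ₗ[ℂ] H :=
      { toFun := fun x => V.symm (U x)
        map_add' := fun x y => by simp
        map_smul' := fun c x => by simp [map_smulₛₗ] }
    have hf : ∀ x, ∃ μ : ℂ, f x = μ • x := fun x => by
      obtain ⟨μ, hμ⟩ := hUV x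
      refine ⟨(starRingEnd ℂ) μ, ?_⟩
      simp [f, hμ, map_smulₛₗ]
    obtain ⟨c, hc⟩ := eigen_const f hf
    have hUVc : ∀ ψ : H, U ψ = (starRingEnd ℂ) c • V ψ := fun ψ => by
      have h1 : V.symm (U ψ) = c • ψ := hc ψ
      have h2 : U ψ = V (c • ψ) := by rw [← h1]; simp
      rw [h2, map_smulₛₗ]
    refine ⟨(starRingEnd ℂ) c, ?_, hUVc⟩
    have h1 : ‖U ψ₀‖ = ‖ψ₀‖ := U.norm_map ψ₀
    rw [hUVc ψ₀, norm_smul, V.norm_map] at h1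
    exact mul_right_cancel₀ (norm_ne_zero_iff.mpr hψ₀) (h1.trans (one_mul ‖ψ₀‖).symm)
end

section
/- Let H and K be complex Hilbert spaces and let U : H → K be antiunitary (a bijective isometry semilinear over complex conjugation: U(λψ) = conj(λ)·U(ψ)). For every closed subspace S of K, the preimage U⁻¹(S) is a closed subspace of H, and: (a) P_S(U ψ) = U(P_{U⁻¹(S)} ψ) for all ψ ∈ H; (b) e_H(ψ, U⁻¹(S)) = e_K(U ψ, S) for every nonzero ψ ∈ H. Hence (U, U⁻¹) is a Chu morphism of the quantum Chu spaces. -/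
local notation "⟪" x ", " y "⟫" => @inner ℂ _ _ x y

theorem antiunitary_inner {H K : Type*} [NormedAddCommGroup H] [InnerProductSpace ℂ H]
    [NormedAddCommGroup K] [InnerProductSpace ℂ K]
    (U : H ≃ₛₗᵢ[starRingEnd ℂ] K) (x y : H) : ⟪U x, U y⟫ = ⟪y, x⟫ := by
  have hI : ∀ z : H, (Complex.I : ℂ) • U z = U ((-Complex.I) • z) := by
    intro z
    rw [U.map_smulₛₗ]
    simp
  have h1 : U x + U y = U (x + y) := (U.map_add x y).symm
  have h2 : U x - U y = U (x - y) := (U.map_sub x y).symm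
  have h3 : U x - Complex.I • U y = U (x + Complex.I • y) := by
    rw [hI, ← U.map_sub]; congr 1; module
  have h4 : U x + Complex.I • U y = U (x - Complex.I • y) := by
    rw [hI, ← U.map_add]; congr 1; module
  have n3 : ‖x + Complex.I • y‖ = ‖y - Complex.I • x‖ := by
    have : (Complex.I : ℂ) • (y - Complex.I • x) = x + Complex.I • y := by
      rw [smul_sub, smul_smul, Complex.I_mul_I]; module
    rw [← this, norm_smul]; simp
  have n4 : ‖x - Complex.I • y‖ = ‖y + Complex.I • x‖ := by
    have : (Complex.I : ℂ) • (x - Complex.I • y) = y + Complex.I • x := by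
      rw [smul_sub, smul_smul, Complex.I_mul_I]; module
    rw [← this, norm_smul]; simp
  rw [inner_eq_sum_norm_sq_div_four, inner_eq_sum_norm_sq_div_four]
  simp only [RCLike.I_to_complex]
  rw [h1, h2, h3, h4]
  simp only [LinearIsometryEquiv.norm_map]
  rw [n3, n4, add_comm x y, norm_sub_rev x y]

/-- Let `U : H ≃ₛₗᵢ[starRingEnd ℂ] K` be antiunitary.  For every closed subspace `S` of `K`,
the preimage `U⁻¹(S)` is a closed subspace of `H`, and (a) `P_S (U ψ) = U (P_{U⁻¹ S} ψ)`
for all `ψ`, (b) `e_H(ψ, U⁻¹ S) = e_K(U ψ, S)` for all nonzero `ψ`.  Hence `(U, U⁻¹)` is a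
Chu morphism of the quantum Chu spaces. -/
theorem antiunitary_chu_morphism
    {H K : Type*} [NormedAddCommGroup H] [InnerProductSpace ℂ H] [CompleteSpace H]
    [NormedAddCommGroup K] [InnerProductSpace ℂ K] [CompleteSpace K]
    (U : H ≃ₛₗᵢ[starRingEnd ℂ] K) (S : Submodule ℂ K) (hS : IsClosed (S : Set K)) :
    ∃ hpre : IsClosed
        ((S.comap (U.toLinearEquiv : H →ₛₗ[starRingEnd ℂ] K) : Submodule ℂ H) : Set H),
      (∀ ψ : H,
        letI : CompleteSpace S := hS.completeSpace_coe
        letI : CompleteSpace (S.comap (U.toLinearEquiv : H →ₛₗ[starRingEnd ℂ] K)) :=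
          hpre.completeSpace_coe
        (Submodule.orthogonalProjectionOnto S (U ψ) : K) =
          U (Submodule.orthogonalProjectionOnto (S.comap (U.toLinearEquiv : H →ₛₗ[starRingEnd ℂ] K)) ψ)) ∧
      (∀ ψ : H, ψ ≠ 0 →
        qeval ψ (S.comap (U.toLinearEquiv : H →ₛₗ[starRingEnd ℂ] K)) hpre =
          qeval (U ψ) S hS) := by
  letI : CompleteSpace S := hS.completeSpace_coe
  set T : Submodule ℂ H := S.comap (U.toLinearEquiv : H →ₛₗ[starRingEnd ℂ] K) with hT
  have hpre : IsClosed ((T : Submodule ℂ H) : Set H) := hS.preimage U.continuous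
  letI : CompleteSpace T := hpre.completeSpace_coe
  have key : ∀ ψ : H, (Submodule.orthogonalProjectionOnto S (U ψ) : K) = U (Submodule.orthogonalProjectionOnto T ψ) := by
    intro ψ
    apply Submodule.eq_starProjection_of_mem_of_inner_eq_zero
    · exact (Submodule.orthogonalProjectionOnto T ψ).2
    · intro w hw
      have hw' : (U.symm w : H) ∈ T := by
        simp only [hT, Submodule.mem_comap]
        simpa using hw
      have horth : ψ - (Submodule.orthogonalProjectionOnto T ψ : H) ∈ Tᗮ :=
        Submodule.sub_starProjection_mem_orthogonal ψ
      have := (Submodule.mem_orthogonal T _).1 horth (U.symm w) hw'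
      calc @inner ℂ _ _ (U ψ - U (Submodule.orthogonalProjectionOnto T ψ)) w
          = @inner ℂ _ _ (U (ψ - (Submodule.orthogonalProjectionOnto T ψ : H))) (U (U.symm w)) := by
            rw [U.map_sub, U.apply_symm_apply]
        _ = @inner ℂ _ _ (U.symm w : H) (ψ - (Submodule.orthogonalProjectionOnto T ψ : H)) :=
            antiunitary_inner U _ _
        _ = 0 := this
  refine ⟨hpre, key, ?_⟩
  intro ψ _
  simp only [qeval]
  rw [key ψ, U.norm_map, U.norm_map]
end

section
/- Let H and K be complex Hilbert spaces, each of dimension greater than 2 (Module.rank ℂ H > 2 and Module.rank ℂ K > 2). Let f_* : ℙ(H) → ℙ(K) be injective and let f^* map closed subspaces of K to closed subspaces of H, such that for every nonzero ψ ∈ H and every closed subspace S of K, with φ a representative of f_*([ψ]): (i) ψ ∈ f^*(S) if and only if φ ∈ S, and (ii) ψ ⊥ f^*(S) (i.e. ψ ∈ f^*(S)ᗮ) if and only if φ ⊥ S. Then there exists a semiunitary map U : H → K (unitary or antiunitary) such that f_*([ψ]) = [U ψ] for every nonzero ψ ∈ H. (Fullness of the three-valued representation: the Chu morphism condition recording only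 the distinctions e = 0, e = 1, and 0 < e < 1 already forces semiunitarity.) -/
set_option linter.unusedSectionVars false

noncomputable section
open Submodule (span)

local notation "⟪" x ", " y "⟫" => @inner ℂ _ _ x y

namespace ThreeValuedAux

variable {H K : Type*} [NormedAddCommGroup H] [InnerProductSpace ℂ H] [CompleteSpace H]
    [NormedAddCommGroup K] [InnerProductSpace ℂ K] [CompleteSpace K]

lemma closed_fin_span {s : Set K} (hs : s.Finite) :
    IsClosed ((span ℂ s : Submodule ℂ K) : Set K) := by
  haveI : FiniteDimensional ℂ (span ℂ s) := FiniteDimensional.span_of_finite ℂ hs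
  exact Submodule.closed_of_finiteDimensional _

variable (f₁ : Projectivization ℂ H → Projectivization ℂ K)

open scoped Classical in
/-- Canonical representative of the image ray. -/
def F (ψ : H) : K :=
  if h : ψ = 0 then 0 else (f₁ (Projectivization.mk ℂ ψ h)).rep

variable {f₁}

lemma F_def {ψ : H} (hψ : ψ ≠ 0) : F f₁ ψ = (f₁ (Projectivization.mk ℂ ψ hψ)).rep := dif_neg hψ

lemma F_ne_zero {ψ : H} (hψ : ψ ≠ 0) : F f₁ ψ ≠ 0 := by
  rw [F_def hψ]; exact Projectivization.rep_nonzero _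

lemma mk_F {ψ : H} (hψ : ψ ≠ 0) :
    Projectivization.mk ℂ (F f₁ ψ) (F_ne_zero hψ) = f₁ (Projectivization.mk ℂ ψ hψ) := by
  simp only [F_def hψ]
  exact Projectivization.mk_rep _

lemma F_congr {ψ χ : H} (hψ : ψ ≠ 0) (hχ : χ ≠ 0)
    (h : Projectivization.mk ℂ ψ hψ = Projectivization.mk ℂ χ hχ) : F f₁ ψ = F f₁ χ := by
  rw [F_def hψ, F_def hχ, h]

lemma F_smul {ψ : H} (hψ : ψ ≠ 0) {c : ℂ} (hc : c ≠ 0) : F f₁ (c • ψ) = F f₁ ψ := by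
  refine F_congr (smul_ne_zero hc hψ) hψ ?_
  exact (Projectivization.mk_eq_mk_iff' ℂ _ _ _ _).mpr ⟨c, rfl⟩

variable (hinj : Function.Injective f₁)
    (f₂ : {S : Submodule ℂ K // IsClosed (S : Set K)} →
          {S : Submodule ℂ H // IsClosed (S : Set H)})
    (hmem : ∀ (ψ : H) (hψ : ψ ≠ 0) (S : {S : Submodule ℂ K // IsClosed (S : Set K)})
      (φ : K) (hφ : φ ≠ 0), Projectivization.mk ℂ φ hφ = f₁ (Projectivization.mk ℂ ψ hψ) →
      (ψ ∈ (f₂ S).1 ↔ φ ∈ S.1))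
    (horth : ∀ (ψ : H) (hψ : ψ ≠ 0) (S : {S : Submodule ℂ K // IsClosed (S : Set K)})
      (φ : K) (hφ : φ ≠ 0), Projectivization.mk ℂ φ hφ = f₁ (Projectivization.mk ℂ ψ hψ) →
      (ψ ∈ ((f₂ S).1)ᗮ ↔ φ ∈ (S.1)ᗮ))

include hmem in
lemma memF {ψ : H} (hψ : ψ ≠ 0) (S : {S : Submodule ℂ K // IsClosed (S : Set K)}) :
    ψ ∈ (f₂ S).1 ↔ F f₁ ψ ∈ S.1 :=
  hmem ψ hψ S (F f₁ ψ) (F_ne_zero hψ) (mk_F hψ)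

include horth in
lemma orthF {ψ : H} (hψ : ψ ≠ 0) (S : {S : Submodule ℂ K // IsClosed (S : Set K)}) :
    ψ ∈ ((f₂ S).1)ᗮ ↔ F f₁ ψ ∈ (S.1)ᗮ :=
  horth ψ hψ S (F f₁ ψ) (F_ne_zero hψ) (mk_F hψ)

include hmem in
lemma F_span {s : Set H} (hs : s.Finite) {ψ : H} (hψ : ψ ≠ 0) (h : ψ ∈ span ℂ s) :
    F f₁ ψ ∈ span ℂ (F f₁ '' s) := by
  have hcl := closed_fin_span (K := K) (hs.image (F f₁))
  have hle : s ⊆ ((f₂ ⟨span ℂ (F f₁ '' s), hcl⟩).1 : Set H) := by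
    intro x hx
    by_cases hx0 : x = 0
    · simpa [hx0] using (f₂ ⟨span ℂ (F f₁ '' s), hcl⟩).1.zero_mem
    · exact (memF f₂ hmem hx0 _).mpr (Submodule.subset_span ⟨x, hx, rfl⟩)
  exact (memF f₂ hmem hψ _).mp (Submodule.span_le.mpr hle h)

include hinj hmem in
lemma f₂_line {χ : H} (hχ : χ ≠ 0) :
    (f₂ ⟨ℂ ∙ (F f₁ χ), closed_fin_span (Set.finite_singleton _)⟩).1 = ℂ ∙ χ := by
  ext x
  simp only [Submodule.mem_span_singleton]
  constructor
  · intro hx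
    by_cases hx0 : x = 0
    · exact ⟨0, by simp [hx0]⟩
    have hFx : F f₁ x ∈ ℂ ∙ F f₁ χ := (memF f₂ hmem hx0 _).mp hx
    rw [Submodule.mem_span_singleton] at hFx
    obtain ⟨c, hc⟩ := hFx
    have hmk : Projectivization.mk ℂ (F f₁ x) (F_ne_zero hx0)
        = Projectivization.mk ℂ (F f₁ χ) (F_ne_zero hχ) :=
      (Projectivization.mk_eq_mk_iff' ℂ _ _ _ _).mpr ⟨c, hc⟩
    rw [mk_F hx0, mk_F hχ] at hmk
    have := hinj hmk
    rw [Projectivization.mk_eq_mk_iff'] at this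
    exact this
  · rintro ⟨c, rfl⟩
    by_cases hc : c = 0
    · simpa [hc] using (f₂ _).1.zero_mem
    refine (memF f₂ hmem (smul_ne_zero hc hχ) _).mpr ?_
    rw [F_smul hχ hc]
    exact Submodule.mem_span_singleton_self _

include hinj hmem horth in
lemma inner_F_eq_zero_iff {ψ χ : H} (hψ : ψ ≠ 0) (hχ : χ ≠ 0) :
    ⟪F f₁ χ, F f₁ ψ⟫ = 0 ↔ ⟪χ, ψ⟫ = 0 := by
  have h := orthF f₂ horth hψ ⟨ℂ ∙ (F f₁ χ), closed_fin_span (Set.finite_singleton _)⟩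
  rw [f₂_line hinj f₂ hmem hχ] at h
  rw [← Submodule.mem_orthogonal_singleton_iff_inner_right,
    ← Submodule.mem_orthogonal_singleton_iff_inner_right]
  exact h.symm

include hinj hmem horth in
lemma exists_preimage {ψ₀ : H} (hψ₀ : ψ₀ ≠ 0) {k : K} (hk : k ≠ 0) :
    ∃ (ψ : H) (hψ : ψ ≠ 0), f₁ (Projectivization.mk ℂ ψ hψ) = Projectivization.mk ℂ k hk := by
  by_contra hno
  push_neg at hno
  -- Step 1 : f₂ of the line through k is ⊥
  have hbot : ∀ (k' : K) (hk' : k' ≠ 0),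
      (∀ (x : H) (hx : x ≠ 0), f₁ (Projectivization.mk ℂ x hx) ≠ Projectivization.mk ℂ k' hk') →
      (f₂ ⟨ℂ ∙ k', closed_fin_span (Set.finite_singleton _)⟩).1 = ⊥ := by
    intro k' hk' hno'
    rw [Submodule.eq_bot_iff]
    intro x hx
    by_contra hx0
    have hFx : F f₁ x ∈ ℂ ∙ k' := (memF f₂ hmem hx0 _).mp hx
    rw [Submodule.mem_span_singleton] at hFx
    obtain ⟨c, hc⟩ := hFx
    have hmk : Projectivization.mk ℂ (F f₁ x) (F_ne_zero hx0) = Projectivization.mk ℂ k' hk' :=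
      (Projectivization.mk_eq_mk_iff' ℂ _ _ _ _).mpr ⟨c, hc⟩
    rw [mk_F hx0] at hmk
    exact hno' x hx0 hmk
  have h1 := hbot k hk hno
  -- Step 2 : every F ψ is orthogonal to k
  have h2 : ∀ (x : H), x ≠ 0 → ⟪k, F f₁ x⟫ = 0 := by
    intro x hx0
    rw [← Submodule.mem_orthogonal_singleton_iff_inner_right]
    refine (orthF f₂ horth hx0 ⟨ℂ ∙ k, closed_fin_span (Set.finite_singleton _)⟩).mp ?_
    rw [h1]
    simp
  set φ₀ := F f₁ ψ₀ with hφ₀def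
  have hφ₀ : φ₀ ≠ 0 := F_ne_zero hψ₀
  have hkφ₀ : ⟪k, φ₀⟫ = 0 := h2 ψ₀ hψ₀
  have hsum : k + φ₀ ≠ 0 := by
    intro h
    have : ⟪k, k + φ₀⟫ = 0 := by rw [h]; simp
    rw [inner_add_right, hkφ₀, add_zero, inner_self_eq_zero] at this
    exact hk this
  -- Step 3 : f₂ of the line through k + φ₀ is ⊥ too
  have h3 : (f₂ ⟨ℂ ∙ (k + φ₀), closed_fin_span (Set.finite_singleton _)⟩).1 = ⊥ := by
    refine hbot (k + φ₀) hsum ?_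
    intro x hx hmk
    have hFx : F f₁ x ∈ ℂ ∙ (k + φ₀) := by
      rw [← mk_F (f₁ := f₁) hx] at hmk
      rw [Projectivization.mk_eq_mk_iff'] at hmk
      obtain ⟨c, hc⟩ := hmk
      exact Submodule.mem_span_singleton.mpr ⟨c, hc⟩
    rw [Submodule.mem_span_singleton] at hFx
    obtain ⟨c, hc⟩ := hFx
    have hc0 : c ≠ 0 := by
      rintro rfl
      exact F_ne_zero hx (by rw [← hc]; simp)
    have : ⟪k, F f₁ x⟫ = c * (‖k‖ : ℂ) ^ 2 := by
      rw [← hc]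
      simp [inner_smul_right, inner_add_right, hkφ₀, inner_self_eq_norm_sq_to_K]
    rw [h2 x hx] at this
    have hk2 : (‖k‖ : ℂ) ^ 2 ≠ 0 := by
      simpa using hk
    exact (mul_ne_zero hc0 hk2) this.symm
  -- Step 4 : contradiction
  have h4 : φ₀ ∈ (ℂ ∙ (k + φ₀))ᗮ := by
    refine (orthF f₂ horth hψ₀ ⟨ℂ ∙ (k + φ₀), closed_fin_span (Set.finite_singleton _)⟩).mp ?_
    rw [h3]
    simp
  rw [Submodule.mem_orthogonal_singleton_iff_inner_right, inner_add_left, hkφ₀,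
    zero_add, inner_self_eq_zero] at h4
  exact hφ₀ h4


variable {ι : Type*} (b : HilbertBasis ι ℂ H)

/-- normalized image of a basis vector -/
def u (f₁ : Projectivization ℂ H → Projectivization ℂ K) (b : HilbertBasis ι ℂ H) (i : ι) : K :=
  (‖F f₁ (b i)‖ : ℂ)⁻¹ • F f₁ (b i)

lemma b_ne_zero (i : ι) : b i ≠ 0 := b.orthonormal.ne_zero i

lemma Fb_eq (i : ι) : F f₁ (b i) = (‖F f₁ (b i)‖ : ℂ) • u f₁ b i := by
  rw [u, smul_smul, mul_inv_cancel₀, one_smul]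
  simpa using F_ne_zero (f₁ := f₁) (b_ne_zero b i)

lemma norm_Fb_ne (i : ι) : (‖F f₁ (b i)‖ : ℂ) ≠ 0 := by
  simpa using F_ne_zero (f₁ := f₁) (b_ne_zero b i)

lemma u_ne_zero (i : ι) : u f₁ b i ≠ 0 :=
  smul_ne_zero (inv_ne_zero (norm_Fb_ne b i)) (F_ne_zero (b_ne_zero b i))

lemma norm_u (i : ι) : ‖u f₁ b i‖ = 1 := by
  rw [u, norm_smul]
  simp only [norm_inv, Complex.norm_real, norm_norm]
  rw [inv_mul_cancel₀]
  simpa using F_ne_zero (f₁ := f₁) (b_ne_zero b i)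

include hinj f₂ hmem horth in
lemma inner_u_F {ψ : H} (hψ : ψ ≠ 0) (i : ι) :
    ⟪u f₁ b i, F f₁ ψ⟫ = 0 ↔ ⟪b i, ψ⟫ = 0 := by
  rw [u, inner_smul_left]
  rw [mul_eq_zero]
  have h2 := inner_F_eq_zero_iff hinj f₂ hmem horth hψ (b_ne_zero b i)
  constructor
  · rintro (h | h)
    · exact absurd h (by simpa using norm_Fb_ne (f₁ := f₁) b i)
    · exact h2.mp h
  · intro h; exact Or.inr (h2.mpr h)

include hinj f₂ hmem horth in
lemma u_orthonormal : Orthonormal ℂ (u f₁ b) := by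
  classical
  rw [orthonormal_iff_ite]
  intro i j
  by_cases hij : i = j
  · subst hij
    rw [if_pos rfl, inner_self_eq_norm_sq_to_K]
    simp [norm_u b i]
  · rw [if_neg hij]
    rw [u, u, inner_smul_left, inner_smul_right]
    have : ⟪F f₁ (b i), F f₁ (b j)⟫ = 0 := by
      rw [inner_F_eq_zero_iff hinj f₂ hmem horth (b_ne_zero b j) (b_ne_zero b i)]
      exact b.orthonormal.2 hij
    rw [this]; ring

omit [CompleteSpace H] [CompleteSpace K] in
lemma mem_span_triple' {x a c d : K} :
    x ∈ span ℂ ({a, c, d} : Set K) ↔ ∃ p q r : ℂ, p • a + q • c + r • d = x := by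
  constructor
  · intro hx
    rw [Submodule.mem_span_insert] at hx
    obtain ⟨p, z, hz, rfl⟩ := hx
    obtain ⟨q, r, hqr⟩ := Submodule.mem_span_pair.mp hz
    exact ⟨p, q, r, by rw [← hqr, add_assoc]⟩
  · rintro ⟨p, q, r, rfl⟩
    refine Submodule.add_mem _ (Submodule.add_mem _ ?_ ?_) ?_ <;>
      exact Submodule.smul_mem _ _ (Submodule.subset_span (by simp))

include hinj f₂ hmem horth in
lemma inner_uu_self (i : ι) : ⟪u f₁ b i, u f₁ b i⟫ = 1 := by
  rw [inner_self_eq_norm_sq_to_K, norm_u b i]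
  norm_num

include hinj f₂ hmem horth in
lemma inner_uu_ne {i j : ι} (hij : i ≠ j) : ⟪u f₁ b i, u f₁ b j⟫ = 0 :=
  (u_orthonormal hinj f₂ hmem horth b).2 hij

omit [CompleteSpace H] [CompleteSpace K] in
lemma inner_bb_self (i : ι) : ⟪b i, (b i : H)⟫ = 1 := by
  rw [inner_self_eq_norm_sq_to_K, b.orthonormal.1 i]
  norm_num

omit [CompleteSpace H] [CompleteSpace K] in
lemma inner_bb_ne {i j : ι} (hij : i ≠ j) : ⟪b i, (b j : H)⟫ = 0 :=
  b.orthonormal.2 hij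

include hinj f₂ hmem horth in
lemma pair_decomp {i j : ι} (hij : i ≠ j) {x : K}
    (hx : x ∈ span ℂ ({u f₁ b i, u f₁ b j} : Set K)) :
    x = ⟪u f₁ b i, x⟫ • u f₁ b i + ⟪u f₁ b j, x⟫ • u f₁ b j := by
  obtain ⟨m, n, h⟩ := Submodule.mem_span_pair.mp hx
  have h1 : ⟪u f₁ b i, x⟫ = m := by
    rw [← h, inner_add_right, inner_smul_right, inner_smul_right,
      inner_uu_self hinj f₂ hmem horth b i, inner_uu_ne hinj f₂ hmem horth b hij]
    ring
  have h2 : ⟪u f₁ b j, x⟫ = n := by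
    rw [← h, inner_add_right, inner_smul_right, inner_smul_right,
      inner_uu_self hinj f₂ hmem horth b j, inner_uu_ne hinj f₂ hmem horth b (Ne.symm hij)]
    ring
  rw [h1, h2, h]

include hinj f₂ hmem horth in
lemma triple_decomp {i j k : ι} (hij : i ≠ j) (hik : i ≠ k) (hjk : j ≠ k) {x : K}
    (hx : x ∈ span ℂ ({u f₁ b i, u f₁ b j, u f₁ b k} : Set K)) :
    x = ⟪u f₁ b i, x⟫ • u f₁ b i + ⟪u f₁ b j, x⟫ • u f₁ b j + ⟪u f₁ b k, x⟫ • u f₁ b k := by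
  obtain ⟨p, q, r, h⟩ := (mem_span_triple' (K := K)).mp hx
  have h1 : ⟪u f₁ b i, x⟫ = p := by
    rw [← h, inner_add_right, inner_add_right, inner_smul_right, inner_smul_right,
      inner_smul_right, inner_uu_self hinj f₂ hmem horth b i,
      inner_uu_ne hinj f₂ hmem horth b hij, inner_uu_ne hinj f₂ hmem horth b hik]
    ring
  have h2 : ⟪u f₁ b j, x⟫ = q := by
    rw [← h, inner_add_right, inner_add_right, inner_smul_right, inner_smul_right,
      inner_smul_right, inner_uu_self hinj f₂ hmem horth b j,
      inner_uu_ne hinj f₂ hmem horth b (Ne.symm hij), inner_uu_ne hinj f₂ hmem horth b hjk]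
    ring
  have h3 : ⟪u f₁ b k, x⟫ = r := by
    rw [← h, inner_add_right, inner_add_right, inner_smul_right, inner_smul_right,
      inner_smul_right, inner_uu_self hinj f₂ hmem horth b k,
      inner_uu_ne hinj f₂ hmem horth b (Ne.symm hik), inner_uu_ne hinj f₂ hmem horth b (Ne.symm hjk)]
    ring
  rw [h1, h2, h3, h]

omit [CompleteSpace H] [CompleteSpace K] in
lemma inner_b_pair₁ {i j : ι} (hij : i ≠ j) (c : ℂ) : ⟪b i, (b i : H) + c • b j⟫ = 1 := by
  rw [inner_add_right, inner_smul_right, inner_bb_self b i, inner_bb_ne b hij]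
  ring

omit [CompleteSpace H] [CompleteSpace K] in
lemma inner_b_pair₂ {i j : ι} (hij : i ≠ j) (c : ℂ) : ⟪b j, (b i : H) + c • b j⟫ = c := by
  rw [inner_add_right, inner_smul_right, inner_bb_self b j, inner_bb_ne b (Ne.symm hij)]
  ring

omit [CompleteSpace H] [CompleteSpace K] in
lemma pair_ne {i j : ι} (hij : i ≠ j) (c : ℂ) : (b i : H) + c • b j ≠ 0 := by
  intro h
  have := inner_b_pair₁ b hij c
  rw [h, inner_zero_right] at this
  exact zero_ne_one this

include hinj f₂ hmem horth in
lemma F_pair_mem {i j : ι} (hij : i ≠ j) (c : ℂ) :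
    F f₁ ((b i : H) + c • b j) ∈ span ℂ ({u f₁ b i, u f₁ b j} : Set K) := by
  have h1 : F f₁ ((b i : H) + c • b j) ∈ span ℂ (F f₁ '' {(b i : H), b j}) := by
    refine F_span f₂ hmem (Set.toFinite _) (pair_ne b hij c) ?_
    exact Submodule.mem_span_pair.mpr ⟨1, c, by simp⟩
  rw [Set.image_pair] at h1
  refine Submodule.span_le.mpr ?_ h1
  rintro x (rfl | rfl)
  · rw [Fb_eq b i]
    exact Submodule.smul_mem _ _ (Submodule.subset_span (by simp))
  · rw [Fb_eq b j]
    exact Submodule.smul_mem _ _ (Submodule.subset_span (by simp))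

variable (f₁) in
/-- the coordinate-change function on each pair of basis indices -/
def g (i j : ι) (c : ℂ) : ℂ :=
  ⟪u f₁ b i, F f₁ ((b i : H) + c • b j)⟫⁻¹ * ⟪u f₁ b j, F f₁ ((b i : H) + c • b j)⟫

include hinj f₂ hmem horth in
lemma d_i_ne {i j : ι} (hij : i ≠ j) (c : ℂ) : ⟪u f₁ b i, F f₁ ((b i : H) + c • b j)⟫ ≠ 0 := by
  rw [Ne, inner_u_F hinj f₂ hmem horth b (pair_ne b hij c) i, inner_b_pair₁ b hij c]
  exact one_ne_zero

include hinj f₂ hmem horth in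
lemma inner_uj_F_pair {i j : ι} (hij : i ≠ j) (c : ℂ) :
    ⟪u f₁ b j, F f₁ ((b i : H) + c • b j)⟫
      = ⟪u f₁ b i, F f₁ ((b i : H) + c • b j)⟫ * g f₁ b i j c := by
  rw [g, ← mul_assoc, mul_inv_cancel₀ (d_i_ne hinj f₂ hmem horth b hij c), one_mul]

include hinj f₂ hmem horth in
lemma F_pair {i j : ι} (hij : i ≠ j) (c : ℂ) :
    F f₁ ((b i : H) + c • b j) = ⟪u f₁ b i, F f₁ ((b i : H) + c • b j)⟫ • u f₁ b i
      + (⟪u f₁ b i, F f₁ ((b i : H) + c • b j)⟫ * g f₁ b i j c) • u f₁ b j := by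
  rw [← inner_uj_F_pair hinj f₂ hmem horth b hij c]
  exact pair_decomp hinj f₂ hmem horth b hij (F_pair_mem hinj f₂ hmem horth b hij c)

include hinj f₂ hmem horth in
lemma g_zero {i j : ι} (hij : i ≠ j) : g f₁ b i j 0 = 0 := by
  rw [g]
  have h : (b i : H) + (0 : ℂ) • b j = b i := by simp
  rw [h]
  have h2 : ⟪u f₁ b j, F f₁ (b i : H)⟫ = 0 := by
    rw [inner_u_F hinj f₂ hmem horth b (b_ne_zero b i) j, inner_bb_ne b (Ne.symm hij)]
  rw [h2, mul_zero]

include hinj f₂ hmem horth in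
lemma g_ne_zero {i j : ι} (hij : i ≠ j) {c : ℂ} (hc : c ≠ 0) : g f₁ b i j c ≠ 0 := by
  rw [g]
  refine mul_ne_zero (inv_ne_zero (d_i_ne hinj f₂ hmem horth b hij c)) ?_
  rw [Ne, inner_u_F hinj f₂ hmem horth b (pair_ne b hij c) j, inner_b_pair₂ b hij c]
  exact hc

include hinj f₂ hmem horth in
lemma key_orth {ψ : H} (hψ : ψ ≠ 0) {i j : ι} (hij : i ≠ j) {x : ℂ}
    (ho : ⟪(b i : H) + x • b j, ψ⟫ = 0) :
    ⟪u f₁ b i, F f₁ ψ⟫ + (starRingEnd ℂ) (g f₁ b i j x) * ⟪u f₁ b j, F f₁ ψ⟫ = 0 := by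
  have h0 : ⟪F f₁ ((b i : H) + x • b j), F f₁ ψ⟫ = 0 :=
    (inner_F_eq_zero_iff hinj f₂ hmem horth hψ (pair_ne b hij x)).mpr ho
  rw [F_pair hinj f₂ hmem horth b hij x, inner_add_left, inner_smul_left,
    inner_smul_left] at h0
  set a := ⟪u f₁ b i, F f₁ ((b i : H) + x • b j)⟫ with ha
  have ha0 : (starRingEnd ℂ) a ≠ 0 := by
    simpa using d_i_ne hinj f₂ hmem horth b hij x
  have h1 : (starRingEnd ℂ) a * (⟪u f₁ b i, F f₁ ψ⟫
      + (starRingEnd ℂ) (g f₁ b i j x) * ⟪u f₁ b j, F f₁ ψ⟫) = 0 := by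
    rw [← h0, map_mul]; ring
  exact (mul_eq_zero.mp h1).resolve_left ha0

include hinj f₂ hmem horth in
lemma g_star {i j : ι} (hij : i ≠ j) {c : ℂ} (hc : c ≠ 0) :
    (starRingEnd ℂ) (g f₁ b i j (-1 / (starRingEnd ℂ) c)) * g f₁ b i j c = -1 := by
  have ho : ⟪(b i : H) + (-1 / (starRingEnd ℂ) c) • b j, ((b i : H) + c • b j)⟫ = 0 := by
    rw [inner_add_left, inner_smul_left, inner_b_pair₁ b hij c, inner_b_pair₂ b hij c]
    rw [map_div₀, map_neg, map_one, Complex.conj_conj]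
    field_simp
    ring
  have hk := key_orth hinj f₂ hmem horth b (pair_ne b hij c) hij ho
  rw [inner_uj_F_pair hinj f₂ hmem horth b hij c] at hk
  set a := ⟪u f₁ b i, F f₁ ((b i : H) + c • b j)⟫ with ha
  have ha0 : a ≠ 0 := d_i_ne hinj f₂ hmem horth b hij c
  have h1 : a * (1 + (starRingEnd ℂ) (g f₁ b i j (-1 / (starRingEnd ℂ) c)) * g f₁ b i j c) = 0 := by
    rw [← hk]; ring
  have h2 := (mul_eq_zero.mp h1).resolve_left ha0
  linear_combination h2

include hinj f₂ hmem horth in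
lemma coeff_ratio {ψ : H} (hψ : ψ ≠ 0) {i j : ι} (hij : i ≠ j) (hci : ⟪b i, ψ⟫ ≠ 0) :
    ⟪u f₁ b j, F f₁ ψ⟫ = g f₁ b i j (⟪b j, ψ⟫ / ⟪b i, ψ⟫) * ⟪u f₁ b i, F f₁ ψ⟫ := by
  by_cases hcj : ⟪b j, ψ⟫ = 0
  · rw [hcj, zero_div, g_zero hinj f₂ hmem horth b hij, zero_mul]
    exact (inner_u_F hinj f₂ hmem horth b hψ j).mpr hcj
  · set c : ℂ := ⟪b j, ψ⟫ / ⟪b i, ψ⟫ with hcdef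
    have hc : c ≠ 0 := div_ne_zero hcj hci
    have ho : ⟪(b i : H) + ((-1 : ℂ) / (starRingEnd ℂ) c) • b j, ψ⟫ = 0 := by
      rw [inner_add_left, inner_smul_left, map_div₀, map_neg, map_one, Complex.conj_conj,
        hcdef]
      field_simp
      ring
    have hk := key_orth hinj f₂ hmem horth b hψ hij ho
    have hstar := g_star hinj f₂ hmem horth b hij hc
    have hgc : g f₁ b i j c ≠ 0 := g_ne_zero hinj f₂ hmem horth b hij hc
    have h1 : g f₁ b i j c * (⟪u f₁ b i, F f₁ ψ⟫
        + (starRingEnd ℂ) (g f₁ b i j (-1 / (starRingEnd ℂ) c)) * ⟪u f₁ b j, F f₁ ψ⟫) = 0 := by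
      rw [hk, mul_zero]
    linear_combination ⟪u f₁ b j, F f₁ ψ⟫ * hstar - h1

omit [CompleteSpace H] [CompleteSpace K] in
lemma inner_b_pair₃ {i j k : ι} (hki : k ≠ i) (hkj : k ≠ j) (c : ℂ) :
    ⟪b k, (b i : H) + c • b j⟫ = 0 := by
  rw [inner_add_right, inner_smul_right, inner_bb_ne b hki, inner_bb_ne b hkj]
  ring

include hinj f₂ hmem horth in
lemma inner_uk_F_pair {i j k : ι} (hij : i ≠ j) (hki : k ≠ i) (hkj : k ≠ j) (c : ℂ) :
    ⟪u f₁ b k, F f₁ ((b i : H) + c • b j)⟫ = 0 := by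
  rw [inner_u_F hinj f₂ hmem horth b (pair_ne b hij c) k, inner_b_pair₃ b hki hkj c]

omit [CompleteSpace H] [CompleteSpace K] in
lemma inner_b_triple₁ {i j k : ι} (hij : i ≠ j) (hik : i ≠ k) (x y : ℂ) :
    ⟪b i, (b i : H) + x • b j + y • b k⟫ = 1 := by
  rw [inner_add_right, inner_add_right, inner_smul_right, inner_smul_right,
    inner_bb_self b i, inner_bb_ne b hij, inner_bb_ne b hik]
  ring

omit [CompleteSpace H] [CompleteSpace K] in
lemma inner_b_triple₂ {i j k : ι} (hij : i ≠ j) (hjk : j ≠ k) (x y : ℂ) :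
    ⟪b j, (b i : H) + x • b j + y • b k⟫ = x := by
  rw [inner_add_right, inner_add_right, inner_smul_right, inner_smul_right,
    inner_bb_self b j, inner_bb_ne b (Ne.symm hij), inner_bb_ne b hjk]
  ring

omit [CompleteSpace H] [CompleteSpace K] in
lemma inner_b_triple₃ {i j k : ι} (hik : i ≠ k) (hjk : j ≠ k) (x y : ℂ) :
    ⟪b k, (b i : H) + x • b j + y • b k⟫ = y := by
  rw [inner_add_right, inner_add_right, inner_smul_right, inner_smul_right,
    inner_bb_self b k, inner_bb_ne b (Ne.symm hik), inner_bb_ne b (Ne.symm hjk)]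
  ring

omit [CompleteSpace H] [CompleteSpace K] in
lemma triple_ne {i j k : ι} (hij : i ≠ j) (hik : i ≠ k) (x y : ℂ) :
    (b i : H) + x • b j + y • b k ≠ 0 := by
  intro h
  have := inner_b_triple₁ b hij hik x y
  rw [h, inner_zero_right] at this
  exact zero_ne_one this

include hinj f₂ hmem horth in
lemma d_i_triple_ne {i j k : ι} (hij : i ≠ j) (hik : i ≠ k) (x y : ℂ) :
    ⟪u f₁ b i, F f₁ ((b i : H) + x • b j + y • b k)⟫ ≠ 0 := by
  rw [Ne, inner_u_F hinj f₂ hmem horth b (triple_ne b hij hik x y) i,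
    inner_b_triple₁ b hij hik x y]
  exact one_ne_zero

include hinj f₂ hmem horth in
lemma inner_uj_F_triple {i j k : ι} (hij : i ≠ j) (hik : i ≠ k) (hjk : j ≠ k) (x y : ℂ) :
    ⟪u f₁ b j, F f₁ ((b i : H) + x • b j + y • b k)⟫
      = g f₁ b i j x * ⟪u f₁ b i, F f₁ ((b i : H) + x • b j + y • b k)⟫ := by
  have h := coeff_ratio hinj f₂ hmem horth b (triple_ne b hij hik x y) hij
    (by rw [inner_b_triple₁ b hij hik x y]; exact one_ne_zero)
  rwa [inner_b_triple₂ b hij hjk x y, inner_b_triple₁ b hij hik x y, div_one] at h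

include hinj f₂ hmem horth in
lemma inner_uk_F_triple {i j k : ι} (hij : i ≠ j) (hik : i ≠ k) (hjk : j ≠ k) (x y : ℂ) :
    ⟪u f₁ b k, F f₁ ((b i : H) + x • b j + y • b k)⟫
      = g f₁ b i k y * ⟪u f₁ b i, F f₁ ((b i : H) + x • b j + y • b k)⟫ := by
  have h := coeff_ratio hinj f₂ hmem horth b (triple_ne b hij hik x y) hik
    (by rw [inner_b_triple₁ b hij hik x y]; exact one_ne_zero)
  rwa [inner_b_triple₃ b hik hjk x y, inner_b_triple₁ b hij hik x y, div_one] at h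

include hinj f₂ hmem horth in
lemma g_add_aux {i j k : ι} (hij : i ≠ j) (hik : i ≠ k) (hjk : j ≠ k) (x : ℂ) {y : ℂ}
    (hy : y ≠ 0) :
    g f₁ b i j (x + y) = g f₁ b i j x - g f₁ b i k 1 / g f₁ b j k (-1 / y) := by
  have hψmem : (b i : H) + (x + y) • b j ∈
      span ℂ ({(b i : H) + x • b j + (1 : ℂ) • b k, (b j : H) + (-1 / y) • b k} : Set H) := by
    refine Submodule.mem_span_pair.mpr ⟨1, y, ?_⟩
    match_scalars <;> field_simp <;> ring
  have hFmem := F_span f₂ hmem (Set.toFinite _) (pair_ne b hij (x + y)) hψmem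
  rw [Set.image_pair] at hFmem
  obtain ⟨α, β, hαβ⟩ := Submodule.mem_span_pair.mp hFmem
  have Ei : α * ⟪u f₁ b i, F f₁ ((b i : H) + x • b j + (1 : ℂ) • b k)⟫
      + β * ⟪u f₁ b i, F f₁ ((b j : H) + (-1 / y) • b k)⟫
      = ⟪u f₁ b i, F f₁ ((b i : H) + (x + y) • b j)⟫ := by
    rw [← hαβ, inner_add_right, inner_smul_right, inner_smul_right]
  have Ej : α * ⟪u f₁ b j, F f₁ ((b i : H) + x • b j + (1 : ℂ) • b k)⟫
      + β * ⟪u f₁ b j, F f₁ ((b j : H) + (-1 / y) • b k)⟫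
      = ⟪u f₁ b j, F f₁ ((b i : H) + (x + y) • b j)⟫ := by
    rw [← hαβ, inner_add_right, inner_smul_right, inner_smul_right]
  have Ek : α * ⟪u f₁ b k, F f₁ ((b i : H) + x • b j + (1 : ℂ) • b k)⟫
      + β * ⟪u f₁ b k, F f₁ ((b j : H) + (-1 / y) • b k)⟫
      = ⟪u f₁ b k, F f₁ ((b i : H) + (x + y) • b j)⟫ := by
    rw [← hαβ, inner_add_right, inner_smul_right, inner_smul_right]
  rw [inner_uk_F_pair hinj f₂ hmem horth b hjk hij hik (-1 / y)] at Ei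
  rw [inner_uj_F_triple hinj f₂ hmem horth b hij hik hjk x 1,
    inner_uj_F_pair hinj f₂ hmem horth b hij (x + y)] at Ej
  rw [inner_uk_F_triple hinj f₂ hmem horth b hij hik hjk x 1,
    inner_uj_F_pair hinj f₂ hmem horth b hjk (-1 / y),
    inner_uk_F_pair hinj f₂ hmem horth b hij (Ne.symm hik) (Ne.symm hjk) (x + y)] at Ek
  have ha : ⟪u f₁ b i, F f₁ ((b i : H) + (x + y) • b j)⟫ ≠ 0 :=
    d_i_ne hinj f₂ hmem horth b hij (x + y)
  have hgJK : g f₁ b j k (-1 / y) ≠ 0 :=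
    g_ne_zero hinj f₂ hmem horth b hjk (by simp [hy])
  have hkey : ⟪u f₁ b i, F f₁ ((b i : H) + (x + y) • b j)⟫
      * (g f₁ b i j x * g f₁ b j k (-1 / y) - g f₁ b i k 1
        - g f₁ b i j (x + y) * g f₁ b j k (-1 / y)) = 0 := by
    linear_combination g f₁ b j k (-1 / y) * Ej - Ek
      - (g f₁ b i j x * g f₁ b j k (-1 / y) - g f₁ b i k 1) * Ei
  have h2 := (mul_eq_zero.mp hkey).resolve_left ha
  have h3 : g f₁ b i k 1 / g f₁ b j k (-1 / y) = g f₁ b i j x - g f₁ b i j (x + y) := by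
    rw [div_eq_iff hgJK]; linear_combination -h2
  rw [h3]; ring

include hinj f₂ hmem horth in
lemma g_add {i j k : ι} (hij : i ≠ j) (hik : i ≠ k) (hjk : j ≠ k) (x y : ℂ) :
    g f₁ b i j (x + y) = g f₁ b i j x + g f₁ b i j y := by
  by_cases hy : y = 0
  · rw [hy, add_zero, g_zero hinj f₂ hmem horth b hij, add_zero]
  · have h1 := g_add_aux hinj f₂ hmem horth b hij hik hjk x hy
    have h2 := g_add_aux hinj f₂ hmem horth b hij hik hjk 0 hy
    rw [zero_add, g_zero hinj f₂ hmem horth b hij, zero_sub] at h2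
    rw [h1, h2]
    ring

include hinj f₂ hmem horth in
lemma g_neg {i j k : ι} (hij : i ≠ j) (hik : i ≠ k) (hjk : j ≠ k) (y : ℂ) :
    g f₁ b i j (-y) = -g f₁ b i j y := by
  have := g_add hinj f₂ hmem horth b hij hik hjk y (-y)
  rw [add_neg_cancel, g_zero hinj f₂ hmem horth b hij] at this
  linear_combination -this

include hinj f₂ hmem horth in
lemma g_mul_rel {i j k : ι} (hij : i ≠ j) (hik : i ≠ k) (hjk : j ≠ k) (x y : ℂ) :
    g f₁ b i j (x * y) = -(g f₁ b i k x * g f₁ b k j (-y)) := by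
  have hψmem : (b i : H) + (x * y) • b j ∈
      span ℂ ({(b i : H) + x • b k, (b k : H) + (-y) • b j} : Set H) := by
    refine Submodule.mem_span_pair.mpr ⟨1, -x, ?_⟩
    match_scalars <;> ring
  have hFmem := F_span f₂ hmem (Set.toFinite _) (pair_ne b hij (x * y)) hψmem
  rw [Set.image_pair] at hFmem
  obtain ⟨α, β, hαβ⟩ := Submodule.mem_span_pair.mp hFmem
  have Ei : α * ⟪u f₁ b i, F f₁ ((b i : H) + x • b k)⟫
      + β * ⟪u f₁ b i, F f₁ ((b k : H) + (-y) • b j)⟫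
      = ⟪u f₁ b i, F f₁ ((b i : H) + (x * y) • b j)⟫ := by
    rw [← hαβ, inner_add_right, inner_smul_right, inner_smul_right]
  have Ej : α * ⟪u f₁ b j, F f₁ ((b i : H) + x • b k)⟫
      + β * ⟪u f₁ b j, F f₁ ((b k : H) + (-y) • b j)⟫
      = ⟪u f₁ b j, F f₁ ((b i : H) + (x * y) • b j)⟫ := by
    rw [← hαβ, inner_add_right, inner_smul_right, inner_smul_right]
  have Ek : α * ⟪u f₁ b k, F f₁ ((b i : H) + x • b k)⟫
      + β * ⟪u f₁ b k, F f₁ ((b k : H) + (-y) • b j)⟫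
      = ⟪u f₁ b k, F f₁ ((b i : H) + (x * y) • b j)⟫ := by
    rw [← hαβ, inner_add_right, inner_smul_right, inner_smul_right]
  -- coordinates of F (b i + x • b k)  (pair (i,k), third j)
  -- coordinates of F (b k + (-y) • b j) (pair (k,j), third i)
  rw [inner_uk_F_pair hinj f₂ hmem horth b (Ne.symm hjk) hik hij (-y)] at Ei
  rw [inner_uk_F_pair hinj f₂ hmem horth b hik (Ne.symm hij) hjk x,
    inner_uj_F_pair hinj f₂ hmem horth b (Ne.symm hjk) (-y),
    inner_uj_F_pair hinj f₂ hmem horth b hij (x * y)] at Ej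
  rw [inner_uj_F_pair hinj f₂ hmem horth b hik x,
    inner_uk_F_pair hinj f₂ hmem horth b hij (Ne.symm hik) (Ne.symm hjk) (x * y)] at Ek
  have ha : ⟪u f₁ b i, F f₁ ((b i : H) + (x * y) • b j)⟫ ≠ 0 :=
    d_i_ne hinj f₂ hmem horth b hij (x * y)
  have hkey : ⟪u f₁ b i, F f₁ ((b i : H) + (x * y) • b j)⟫
      * (g f₁ b i j (x * y) + g f₁ b i k x * g f₁ b k j (-y)) = 0 := by
    linear_combination g f₁ b k j (-y) * Ek - Ej
      - g f₁ b i k x * g f₁ b k j (-y) * Ei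
  have h2 := (mul_eq_zero.mp hkey).resolve_left ha
  linear_combination h2

variable (f₁) in
/-- the normalized coordinate change (will be the field automorphism) -/
def sig (i j : ι) (c : ℂ) : ℂ := g f₁ b i j c / g f₁ b i j 1

include hinj f₂ hmem horth in
lemma nu_ne {i j : ι} (hij : i ≠ j) : g f₁ b i j 1 ≠ 0 :=
  g_ne_zero hinj f₂ hmem horth b hij one_ne_zero

include hinj f₂ hmem horth in
lemma sig_one {i j : ι} (hij : i ≠ j) : sig f₁ b i j 1 = 1 :=
  div_self (nu_ne hinj f₂ hmem horth b hij)

include hinj f₂ hmem horth in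
lemma sig_zero {i j : ι} (hij : i ≠ j) : sig f₁ b i j 0 = 0 := by
  rw [sig, g_zero hinj f₂ hmem horth b hij, zero_div]

include hinj f₂ hmem horth in
lemma sig_ne_zero {i j : ι} (hij : i ≠ j) {c : ℂ} (hc : c ≠ 0) : sig f₁ b i j c ≠ 0 :=
  div_ne_zero (g_ne_zero hinj f₂ hmem horth b hij hc) (nu_ne hinj f₂ hmem horth b hij)

include hinj f₂ hmem horth in
lemma g_eq_nu_sig {i j : ι} (hij : i ≠ j) (c : ℂ) :
    g f₁ b i j c = g f₁ b i j 1 * sig f₁ b i j c := by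
  rw [sig, mul_div_cancel₀ _ (nu_ne hinj f₂ hmem horth b hij)]

include hinj f₂ hmem horth in
lemma sig_add {i j k : ι} (hij : i ≠ j) (hik : i ≠ k) (hjk : j ≠ k) (x y : ℂ) :
    sig f₁ b i j (x + y) = sig f₁ b i j x + sig f₁ b i j y := by
  rw [sig, sig, sig, g_add hinj f₂ hmem horth b hij hik hjk x y, add_div]

include hinj f₂ hmem horth in
lemma g_mul_g {i j k : ι} (hij : i ≠ j) (hik : i ≠ k) (hjk : j ≠ k) (x y : ℂ) :
    g f₁ b i j (x * y) * g f₁ b i j 1 = g f₁ b i j x * g f₁ b i j y := by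
  have M := g_mul_rel hinj f₂ hmem horth b hij hik hjk x y
  have Mx := g_mul_rel hinj f₂ hmem horth b hij hik hjk x 1
  rw [mul_one] at Mx
  have My := g_mul_rel hinj f₂ hmem horth b hij hik hjk 1 y
  rw [one_mul] at My
  have M1 := g_mul_rel hinj f₂ hmem horth b hij hik hjk 1 1
  rw [mul_one] at M1
  rw [M, Mx, My, M1]
  ring

include hinj f₂ hmem horth in
lemma sig_mul {i j k : ι} (hij : i ≠ j) (hik : i ≠ k) (hjk : j ≠ k) (x y : ℂ) :
    sig f₁ b i j (x * y) = sig f₁ b i j x * sig f₁ b i j y := by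
  have h := g_mul_g hinj f₂ hmem horth b hij hik hjk x y
  have h1 := nu_ne hinj f₂ hmem horth b hij
  rw [sig, sig, sig, div_mul_div_comm, eq_div_iff (mul_ne_zero h1 h1), div_mul_eq_mul_div,
    div_eq_iff h1]
  linear_combination g f₁ b i j 1 * h

include hinj f₂ hmem horth in
lemma g_factor {i j k : ι} (hij : i ≠ j) (hik : i ≠ k) (hjk : j ≠ k) (x : ℂ) :
    g f₁ b i j x = g f₁ b i k x * g f₁ b k j 1 := by
  have Mx := g_mul_rel hinj f₂ hmem horth b hij hik hjk x 1
  rw [mul_one, g_neg hinj f₂ hmem horth b (Ne.symm hjk) (Ne.symm hik) (Ne.symm hij) 1] at Mx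
  rw [Mx]; ring

include hinj f₂ hmem horth in
lemma g_factor' {i j k : ι} (hij : i ≠ j) (hik : i ≠ k) (hjk : j ≠ k) (y : ℂ) :
    g f₁ b i j y = g f₁ b i k 1 * g f₁ b k j y := by
  have My := g_mul_rel hinj f₂ hmem horth b hij hik hjk 1 y
  rw [one_mul, g_neg hinj f₂ hmem horth b (Ne.symm hjk) (Ne.symm hik) (Ne.symm hij) y] at My
  rw [My]; ring

include hinj f₂ hmem horth in
lemma sig_eq_second {i j k : ι} (hij : i ≠ j) (hik : i ≠ k) (hjk : j ≠ k) (c : ℂ) :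
    sig f₁ b i j c = sig f₁ b i k c := by
  rw [sig, sig, g_factor hinj f₂ hmem horth b hij hik hjk c,
    g_factor hinj f₂ hmem horth b hij hik hjk 1]
  rw [mul_div_mul_right _ _ (nu_ne hinj f₂ hmem horth b (Ne.symm hjk))]

include hinj f₂ hmem horth in
lemma sig_eq_first {i j k : ι} (hij : i ≠ j) (hik : i ≠ k) (hjk : j ≠ k) (c : ℂ) :
    sig f₁ b i j c = sig f₁ b k j c := by
  rw [sig, sig, g_factor' hinj f₂ hmem horth b hij hik hjk c,
    g_factor' hinj f₂ hmem horth b hij hik hjk 1]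
  rw [mul_div_mul_left _ _ (nu_ne hinj f₂ hmem horth b hik)]

include hinj f₂ hmem horth in
lemma nu_cocycle {i j k : ι} (hij : i ≠ j) (hik : i ≠ k) (hjk : j ≠ k) :
    g f₁ b i j 1 = g f₁ b i k 1 * g f₁ b k j 1 :=
  g_factor hinj f₂ hmem horth b hij hik hjk 1

include hinj f₂ hmem horth in
lemma g_conj_rel {i j k : ι} (hij : i ≠ j) (hik : i ≠ k) (hjk : j ≠ k) {c : ℂ} (hc : c ≠ 0) :
    (starRingEnd ℂ) (g f₁ b i j 1) ^ 2 * g f₁ b i j c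
      = (starRingEnd ℂ) (g f₁ b i j ((starRingEnd ℂ) c)) := by
  have hcc : (starRingEnd ℂ) c ≠ 0 := by simpa using hc
  have hstar := g_star hinj f₂ hmem horth b hij hc
  have hE := g_mul_g hinj f₂ hmem horth b hij hik hjk ((starRingEnd ℂ) c)
    (-1 / (starRingEnd ℂ) c)
  have hprod : (starRingEnd ℂ) c * (-1 / (starRingEnd ℂ) c) = -1 := by
    field_simp
  rw [hprod, g_neg hinj f₂ hmem horth b hij hik hjk 1] at hE
  -- hE : -g1 * g1 = g(conj c) * g(-1/conj c)
  have hE' := congrArg (starRingEnd ℂ) hE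
  simp only [map_mul, map_neg] at hE'
  -- hstar : conj (g (-1/conj c)) * g c = -1
  have hBne : (starRingEnd ℂ) (g f₁ b i j ((starRingEnd ℂ) c)) ≠ 0 := by
    simpa using g_ne_zero hinj f₂ hmem horth b hij hcc
  linear_combination (-(g f₁ b i j c)) * hE'
    - (starRingEnd ℂ) (g f₁ b i j ((starRingEnd ℂ) c)) * hstar

include hinj f₂ hmem horth in
lemma nu_unit {i j k : ι} (hij : i ≠ j) (hik : i ≠ k) (hjk : j ≠ k) :
    (starRingEnd ℂ) (g f₁ b i j 1) * g f₁ b i j 1 = 1 := by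
  have h := g_conj_rel hinj f₂ hmem horth b hij hik hjk one_ne_zero
  rw [map_one] at h
  have hne : (starRingEnd ℂ) (g f₁ b i j 1) ≠ 0 := by
    simpa using nu_ne hinj f₂ hmem horth b hij
  have := mul_left_cancel₀ hne (by linear_combination h :
    (starRingEnd ℂ) (g f₁ b i j 1) * ((starRingEnd ℂ) (g f₁ b i j 1) * g f₁ b i j 1)
      = (starRingEnd ℂ) (g f₁ b i j 1) * 1)
  exact this

include hinj f₂ hmem horth in
lemma sig_conj {i j k : ι} (hij : i ≠ j) (hik : i ≠ k) (hjk : j ≠ k) (c : ℂ) :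
    sig f₁ b i j ((starRingEnd ℂ) c) = (starRingEnd ℂ) (sig f₁ b i j c) := by
  by_cases hc : c = 0
  · rw [hc, map_zero, sig_zero hinj f₂ hmem horth b hij, map_zero]
  have h := g_conj_rel hinj f₂ hmem horth b hij hik hjk hc
  have hunit := nu_unit hinj f₂ hmem horth b hij hik hjk
  have h' := congrArg (starRingEnd ℂ) h
  simp only [map_mul, map_pow, Complex.conj_conj] at h'
  rw [sig, sig, map_div₀, div_eq_div_iff (nu_ne hinj f₂ hmem horth b hij)
    (by simpa using nu_ne hinj f₂ hmem horth b hij)]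
  linear_combination (-(starRingEnd ℂ) (g f₁ b i j 1)) * h'
    + (starRingEnd ℂ) (g f₁ b i j c) * g f₁ b i j 1 * hunit

omit [CompleteSpace H] [CompleteSpace K] in
lemma exists_coeff_ne {ψ : H} (hψ : ψ ≠ 0) : ∃ i, ⟪b i, ψ⟫ ≠ 0 := by
  by_contra h
  push_neg at h
  apply hψ
  have : b.repr ψ = 0 := by
    ext i
    rw [b.repr_apply_apply, h i]
    rfl
  simpa using congrArg b.repr.symm this

include hinj f₂ hmem horth in
lemma u_complete {ψ₀ : H} (hψ₀ : ψ₀ ≠ 0) :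
    (span ℂ (Set.range (u f₁ b)))ᗮ = ⊥ := by
  rw [Submodule.eq_bot_iff]
  intro x hx
  by_contra hx0
  obtain ⟨ψ, hψ, hmk⟩ := exists_preimage hinj f₂ hmem horth hψ₀ hx0
  rw [← mk_F (f₁ := f₁) hψ, Projectivization.mk_eq_mk_iff'] at hmk
  obtain ⟨a, ha⟩ := hmk
  have hammm : ∀ i : ι, ⟪b i, ψ⟫ = 0 := by
    intro i
    rw [← inner_u_F hinj f₂ hmem horth b hψ i, ← ha, inner_smul_right]
    have : ⟪u f₁ b i, x⟫ = 0 := by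
      have := (Submodule.mem_orthogonal _ x).mp hx (u f₁ b i)
        (Submodule.subset_span (Set.mem_range_self i))
      exact this
    rw [this, mul_zero]
  obtain ⟨i, hi⟩ := exists_coeff_ne b hψ
  exact hi (hammm i)

omit [CompleteSpace K] in
include b in
lemma three_distinct (hH : 2 < Module.rank ℂ H) : ∃ i j k : ι, i ≠ j ∧ i ≠ k ∧ j ≠ k := by
  by_contra hno
  push_neg at hno
  -- extract: range b is contained in a two-element set
  have hsub : ∃ x y : H, Set.range (⇑b : ι → H) ⊆ {x, y} := by
    rcases isEmpty_or_nonempty ι with hemp | ⟨⟨i0⟩⟩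
    · exact ⟨0, 0, by simp [Set.range_eq_empty]⟩
    by_cases hj : ∃ j : ι, j ≠ i0
    · obtain ⟨j0, hj0⟩ := hj
      refine ⟨b i0, b j0, ?_⟩
      rintro _ ⟨k, rfl⟩
      by_cases hk : k = i0
      · exact Or.inl (by rw [hk])
      · have hkj := hno i0 k j0 (fun h => hk h.symm) (Ne.symm hj0)
        rw [hkj]
        exact Or.inr (Set.mem_singleton _)
    · push_neg at hj
      refine ⟨b i0, b i0, ?_⟩
      rintro _ ⟨k, rfl⟩
      exact Or.inl (by rw [hj k])
  obtain ⟨x, y, hxy⟩ := hsub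
  have hcl : IsClosed ((span ℂ ({x, y} : Set H) : Submodule ℂ H) : Set H) :=
    closed_fin_span (Set.toFinite _)
  have htop : (span ℂ ({x, y} : Set H)) = ⊤ := by
    refine le_antisymm le_top ?_
    have hd : (span ℂ (Set.range (⇑b : ι → H))).topologicalClosure = ⊤ := b.dense_span
    calc (⊤ : Submodule ℂ H) = (span ℂ (Set.range (⇑b : ι → H))).topologicalClosure := hd.symm
      _ ≤ span ℂ ({x, y} : Set H) := Submodule.topologicalClosure_minimal _
          (Submodule.span_le.mpr (hxy.trans Submodule.subset_span)) hcl
  have h1 : Module.rank ℂ H = Module.rank ℂ (span ℂ ({x, y} : Set H)) := by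
    rw [htop, rank_top]
  have h2 : Module.rank ℂ (span ℂ ({x, y} : Set H)) ≤ 2 := by
    refine (rank_span_le _).trans ?_
    have : ({x, y} : Set H) = insert x {y} := rfl
    rw [this]
    refine (Cardinal.mk_insert_le).trans ?_
    rw [Cardinal.mk_singleton]
    norm_num
  rw [h1] at hH
  exact absurd h2 (not_le.mpr hH)

include hinj f₂ hmem horth in
lemma sig_id_or_conj {i j k : ι} (hij : i ≠ j) (hik : i ≠ k) (hjk : j ≠ k) :
    (∀ c, sig f₁ b i j c = c) ∨ (∀ c, sig f₁ b i j c = (starRingEnd ℂ) c) := by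
  set Sg : ℂ →+* ℂ :=
    { toFun := sig f₁ b i j
      map_one' := sig_one hinj f₂ hmem horth b hij
      map_mul' := sig_mul hinj f₂ hmem horth b hij hik hjk
      map_zero' := sig_zero hinj f₂ hmem horth b hij
      map_add' := sig_add hinj f₂ hmem horth b hij hik hjk } with hSg
  have hconj : ∀ c, Sg ((starRingEnd ℂ) c) = (starRingEnd ℂ) (Sg c) :=
    sig_conj hinj f₂ hmem horth b hij hik hjk
  have him : ∀ r : ℝ, (Sg (r : ℂ)).im = 0 := by
    intro r
    have h := hconj (r : ℂ)
    rw [Complex.conj_ofReal] at h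
    have : (starRingEnd ℂ) (Sg (r : ℂ)) = Sg (r : ℂ) := h.symm
    rw [Complex.conj_eq_iff_im] at this
    exact this
  have hfix : ∀ r : ℝ, Sg (r : ℂ) = (r : ℂ) := by
    set ρ : ℝ →+* ℝ :=
      { toFun := fun r => (Sg (r : ℂ)).re
        map_one' := by simp
        map_mul' := by
          intro r s
          have : ((r * s : ℝ) : ℂ) = (r : ℂ) * (s : ℂ) := by push_cast; ring
          simp only [this, map_mul, Complex.mul_re, him, mul_zero, sub_zero]
        map_zero' := by simp
        map_add' := by
          intro r s
          have : ((r + s : ℝ) : ℂ) = (r : ℂ) + (s : ℂ) := by push_cast; ring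
          simp only [this, map_add, Complex.add_re] } with hρ
    have hρid : ρ = RingHom.id ℝ := Subsingleton.elim _ _
    intro r
    have h1 : (Sg (r : ℂ)).re = r := by
      have := congrArg (fun f => f r) hρid
      exact this
    refine Complex.ext ?_ ?_
    · rw [h1, Complex.ofReal_re]
    · rw [him r, Complex.ofReal_im]
  have hcont : Continuous Sg := by
    let L : ℂ →ₗ[ℝ] ℂ :=
      { toFun := Sg
        map_add' := map_add Sg
        map_smul' := by
          intro r z
          simp only [RingHom.id_apply]
          rw [Complex.real_smul, map_mul, hfix r, Complex.real_smul] }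
    exact L.continuous_of_finiteDimensional
  rcases Complex.ringHom_eq_id_or_conj_of_continuous hcont with h | h
  · left
    intro c
    have := DFunLike.congr_fun h c
    simpa [hSg] using this
  · right
    intro c
    have := DFunLike.congr_fun h c
    simpa [hSg] using this

omit [NormedAddCommGroup H] [InnerProductSpace ℂ H] [CompleteSpace H]
  [NormedAddCommGroup K] [InnerProductSpace ℂ K] [CompleteSpace K] in
lemma exists_third (h3 : ∃ i j k : ι, i ≠ j ∧ i ≠ k ∧ j ≠ k) (i j : ι) :
    ∃ k, k ≠ i ∧ k ≠ j := by
  obtain ⟨a, b', c, hab, hac, hbc⟩ := h3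
  by_cases ha : a ≠ i ∧ a ≠ j
  · exact ⟨a, ha⟩
  by_cases hb : b' ≠ i ∧ b' ≠ j
  · exact ⟨b', hb⟩
  by_cases hc : c ≠ i ∧ c ≠ j
  · exact ⟨c, hc⟩
  exfalso
  rw [not_and_or, not_ne_iff, not_ne_iff] at ha hb hc
  rcases ha with rfl | rfl <;> rcases hb with rfl | rfl <;> rcases hc with rfl | rfl <;>
    simp_all

include hinj f₂ hmem horth in
lemma nu_unit' (h3 : ∃ i j k : ι, i ≠ j ∧ i ≠ k ∧ j ≠ k) {i j : ι} (hij : i ≠ j) :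
    (starRingEnd ℂ) (g f₁ b i j 1) * g f₁ b i j 1 = 1 := by
  obtain ⟨k, hki, hkj⟩ := exists_third h3 i j
  exact nu_unit hinj f₂ hmem horth b hij (Ne.symm hki) (Ne.symm hkj)

include hinj f₂ hmem horth in
lemma nu_swap' (h3 : ∃ i j k : ι, i ≠ j ∧ i ≠ k ∧ j ≠ k) {i j : ι} (hij : i ≠ j) :
    g f₁ b i j 1 * g f₁ b j i 1 = 1 := by
  obtain ⟨k, hki, hkj⟩ := exists_third h3 i j
  have h1 : g f₁ b j k 1 = g f₁ b j i 1 * g f₁ b i k 1 :=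
    nu_cocycle hinj f₂ hmem horth b (Ne.symm hkj) (Ne.symm hij) hki
  have h2 : g f₁ b i k 1 = g f₁ b i j 1 * g f₁ b j k 1 :=
    nu_cocycle hinj f₂ hmem horth b (Ne.symm hki) hij hkj
  have hne : g f₁ b j k 1 ≠ 0 := nu_ne hinj f₂ hmem horth b (Ne.symm hkj)
  have : g f₁ b j k 1 * 1 = g f₁ b j k 1 * (g f₁ b i j 1 * g f₁ b j i 1) := by
    rw [h1] at *
    linear_combination (g f₁ b j i 1) * h2
  exact (mul_left_cancel₀ hne this).symm

include hinj f₂ hmem horth in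
lemma sig_eq_all (h3 : ∃ i j k : ι, i ≠ j ∧ i ≠ k ∧ j ≠ k) {i j i' j' : ι}
    (hij : i ≠ j) (hij' : i' ≠ j') (c : ℂ) :
    sig f₁ b i j c = sig f₁ b i' j' c := by
  -- claim A : change second index
  have A : ∀ p q q' : ι, p ≠ q → p ≠ q' → sig f₁ b p q c = sig f₁ b p q' c := by
    intro p q q' hpq hpq'
    by_cases h : q = q'
    · rw [h]
    · exact sig_eq_second hinj f₂ hmem horth b hpq hpq' h c
  -- claim B : change first index
  have B : ∀ p p' q : ι, p ≠ q → p' ≠ q → sig f₁ b p q c = sig f₁ b p' q c := by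
    intro p p' q hpq hp'q
    by_cases h : p = p'
    · rw [h]
    · exact (sig_eq_first hinj f₂ hmem horth b hp'q (Ne.symm h) (Ne.symm hpq) c).symm
  -- swap
  have SW : ∀ p q : ι, p ≠ q → sig f₁ b p q c = sig f₁ b q p c := by
    intro p q hpq
    obtain ⟨k, hkp, hkq⟩ := exists_third h3 p q
    calc sig f₁ b p q c = sig f₁ b p k c := A p q k hpq (Ne.symm hkp)
      _ = sig f₁ b q k c := B p q k (Ne.symm hkp) (Ne.symm hkq)
      _ = sig f₁ b q p c := A q k p (Ne.symm hkq) (Ne.symm hpq)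
  by_cases h1 : i' ≠ j
  · calc sig f₁ b i j c = sig f₁ b i' j c := B i i' j hij h1
      _ = sig f₁ b i' j' c := A i' j j' h1 hij'
  · push_neg at h1
    subst h1
    by_cases h2 : i ≠ j'
    · calc sig f₁ b i i' c = sig f₁ b i j' c := A i i' j' hij h2
        _ = sig f₁ b i' j' c := B i i' j' h2 hij'
    · push_neg at h2
      subst h2
      exact SW i i' hij

variable (f₁) in
open scoped Classical in
/-- phases for the image basis -/
def nu' (a t : ι) : ℂ := if t = a then 1 else g f₁ b a t 1

variable (f₁) in
/-- the image Hilbert basis vectors -/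
def vv (a t : ι) : K := nu' f₁ b a t • u f₁ b t

include hinj f₂ hmem horth in
lemma nu'_ne (a t : ι) : nu' f₁ b a t ≠ 0 := by
  rw [nu']
  split
  · exact one_ne_zero
  · exact nu_ne hinj f₂ hmem horth b (by rename_i h; exact fun hh => h hh.symm)

include hinj f₂ hmem horth in
lemma nu'_unit (h3 : ∃ i j k : ι, i ≠ j ∧ i ≠ k ∧ j ≠ k) (a t : ι) :
    (starRingEnd ℂ) (nu' f₁ b a t) * nu' f₁ b a t = 1 := by
  rw [nu']
  split
  · simp
  · exact nu_unit' hinj f₂ hmem horth b h3 (by rename_i h; exact fun hh => h (hh.symm ▸ rfl))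

include hinj f₂ hmem horth in
lemma nu_pair_rel (h3 : ∃ i j k : ι, i ≠ j ∧ i ≠ k ∧ j ≠ k) {a i₀ t : ι} (hti : t ≠ i₀) :
    (starRingEnd ℂ) (nu' f₁ b a t) * g f₁ b i₀ t 1 = (starRingEnd ℂ) (nu' f₁ b a i₀) := by
  have hconj_inv : ∀ p q : ι, p ≠ q →
      (starRingEnd ℂ) (g f₁ b p q 1) = (g f₁ b p q 1)⁻¹ := by
    intro p q hpq
    have h := nu_unit' hinj f₂ hmem horth b h3 hpq
    have hne := nu_ne hinj f₂ hmem horth b hpq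
    field_simp
    linear_combination h
  by_cases hia : i₀ = a
  · subst hia
    rw [nu', if_neg hti, nu', if_pos rfl, map_one]
    exact nu_unit' hinj f₂ hmem horth b h3 (Ne.symm hti)
  · have hsw := nu_swap' hinj f₂ hmem horth b h3 (show (a : ι) ≠ i₀ from fun h => hia h.symm)
    have hne2 : g f₁ b a i₀ 1 ≠ 0 := nu_ne hinj f₂ hmem horth b (fun h => hia h.symm)
    have hswap : g f₁ b i₀ a 1 = (g f₁ b a i₀ 1)⁻¹ := by
      field_simp
      linear_combination hsw
    by_cases hta : t = a
    · rw [nu', if_pos hta, map_one, one_mul, nu', if_neg hia, hta, hswap,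
        hconj_inv a i₀ (fun h => hia h.symm)]
    · have hco : g f₁ b i₀ t 1 = g f₁ b i₀ a 1 * g f₁ b a t 1 :=
        nu_cocycle hinj f₂ hmem horth b (Ne.symm hti) (fun h => hia h) (fun h => hta h)
      have hne1 : g f₁ b a t 1 ≠ 0 := nu_ne hinj f₂ hmem horth b (fun h => hta h.symm)
      rw [nu', if_neg hta, nu', if_neg hia, hco, hswap,
        hconj_inv a t (fun h => hta h.symm), hconj_inv a i₀ (fun h => hia h.symm)]
      field_simp

omit [CompleteSpace H] [CompleteSpace K] in
lemma inner_vv (a t : ι) (y : K) :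
    ⟪vv f₁ b a t, y⟫ = (starRingEnd ℂ) (nu' f₁ b a t) * ⟪u f₁ b t, y⟫ := by
  rw [vv, inner_smul_left]

include hinj f₂ hmem horth in
lemma norm_nu' (h3 : ∃ i j k : ι, i ≠ j ∧ i ≠ k ∧ j ≠ k) (a t : ι) :
    ‖nu' f₁ b a t‖ = 1 := by
  have h := nu'_unit hinj f₂ hmem horth b h3 a t
  have h2 : (Complex.normSq (nu' f₁ b a t) : ℂ) = 1 := by
    rw [Complex.normSq_eq_conj_mul_self]
    exact h
  have h3' : Complex.normSq (nu' f₁ b a t) = 1 := by exact_mod_cast h2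
  have h4 : ‖nu' f₁ b a t‖ ^ 2 = 1 := by
    rw [← Complex.sq_norm] at h3'
    exact h3'
  nlinarith [norm_nonneg (nu' f₁ b a t)]

include hinj f₂ hmem horth in
lemma vv_orthonormal (h3 : ∃ i j k : ι, i ≠ j ∧ i ≠ k ∧ j ≠ k) (a : ι) :
    Orthonormal ℂ (vv f₁ b a) := by
  constructor
  · intro t
    rw [vv, norm_smul, norm_nu' hinj f₂ hmem horth b h3 a t, norm_u b t, one_mul]
  · intro s t hst
    rw [vv, vv, inner_smul_left, inner_smul_right,
      inner_uu_ne hinj f₂ hmem horth b hst]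
    ring

include hinj f₂ hmem horth in
lemma vv_complete {ψ₀ : H} (hψ₀ : ψ₀ ≠ 0) (a : ι) :
    (span ℂ (Set.range (vv f₁ b a)))ᗮ = ⊥ := by
  have hspan : span ℂ (Set.range (vv f₁ b a)) = span ℂ (Set.range (u f₁ b)) := by
    refine le_antisymm (Submodule.span_le.mpr ?_) (Submodule.span_le.mpr ?_)
    · rintro _ ⟨t, rfl⟩
      rw [vv]
      exact Submodule.smul_mem _ _ (Submodule.subset_span (Set.mem_range_self t))
    · rintro _ ⟨t, rfl⟩
      have : u f₁ b t = (nu' f₁ b a t)⁻¹ • vv f₁ b a t := by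
        rw [vv, smul_smul, inv_mul_cancel₀ (nu'_ne hinj f₂ hmem horth b a t), one_smul]
      rw [this]
      exact Submodule.smul_mem _ _ (Submodule.subset_span (Set.mem_range_self t))
  rw [hspan]
  exact u_complete hinj f₂ hmem horth b hψ₀

include hinj f₂ hmem horth in
lemma central {a aj ak : ι} (hab : a ≠ aj) (hak : a ≠ ak) (hjk : aj ≠ ak)
    {ψ : H} (hψ : ψ ≠ 0) :
    ∃ μ : ℂ, μ ≠ 0 ∧ ∀ t : ι,
      ⟪vv f₁ b a t, F f₁ ψ⟫ = μ * sig f₁ b a aj ⟪b t, ψ⟫ := by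
  have h3 : ∃ i j k : ι, i ≠ j ∧ i ≠ k ∧ j ≠ k := ⟨a, aj, ak, hab, hak, hjk⟩
  obtain ⟨i₀, hc0⟩ := exists_coeff_ne b hψ
  have hd : ⟪u f₁ b i₀, F f₁ ψ⟫ ≠ 0 :=
    fun h => hc0 ((inner_u_F hinj f₂ hmem horth b hψ i₀).mp h)
  have hS0 : sig f₁ b a aj ⟪b i₀, ψ⟫ ≠ 0 := sig_ne_zero hinj f₂ hmem horth b hab hc0
  have hν0 : (starRingEnd ℂ) (nu' f₁ b a i₀) ≠ 0 := by
    simpa using nu'_ne hinj f₂ hmem horth b a i₀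
  refine ⟨(starRingEnd ℂ) (nu' f₁ b a i₀) * ⟪u f₁ b i₀, F f₁ ψ⟫ / sig f₁ b a aj ⟪b i₀, ψ⟫,
    div_ne_zero (mul_ne_zero hν0 hd) hS0, ?_⟩
  intro t
  by_cases hti : t = i₀
  · subst hti
    rw [inner_vv, div_mul_cancel₀ _ hS0]
  · have hrel := coeff_ratio hinj f₂ hmem horth b hψ
      (show i₀ ≠ t from fun h => hti h.symm) hc0
    have hgexp := g_eq_nu_sig hinj f₂ hmem horth b
      (show i₀ ≠ t from fun h => hti h.symm) (⟪b t, ψ⟫ / ⟪b i₀, ψ⟫)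
    have hsg := sig_eq_all hinj f₂ hmem horth b h3
      (show i₀ ≠ t from fun h => hti h.symm) hab (⟪b t, ψ⟫ / ⟪b i₀, ψ⟫)
    have hratio : sig f₁ b a aj (⟪b t, ψ⟫ / ⟪b i₀, ψ⟫) * sig f₁ b a aj ⟪b i₀, ψ⟫
        = sig f₁ b a aj ⟪b t, ψ⟫ := by
      rw [← sig_mul hinj f₂ hmem horth b hab hak hjk, div_mul_cancel₀ _ hc0]
    have hnu := nu_pair_rel hinj f₂ hmem horth b h3 (a := a) hti
    rw [inner_vv, hrel, hgexp, hsg, div_mul_eq_mul_div, eq_div_iff hS0]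
    linear_combination (sig f₁ b a aj (⟪b t, ψ⟫ / ⟪b i₀, ψ⟫) * ⟪u f₁ b i₀, F f₁ ψ⟫
        * sig f₁ b a aj ⟪b i₀, ψ⟫) * hnu
      + ((starRingEnd ℂ) (nu' f₁ b a i₀) * ⟪u f₁ b i₀, F f₁ ψ⟫) * hratio

omit [CompleteSpace H] [CompleteSpace K] in
lemma eq_of_inner_basis (bK : HilbertBasis ι ℂ K) {x y : K}
    (h : ∀ t, bK.repr x t = bK.repr y t) : x = y := by
  have h0 : bK.repr x = bK.repr y := by
    ext t
    exact h t
  exact bK.repr.injective h0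

end ThreeValuedAux

/-- complex conjugation on `ℓ²` as an antiunitary. -/
noncomputable def starl2 (ιx : Type*) :
    lp (fun _ : ιx => ℂ) 2 ≃ₛₗᵢ[starRingEnd ℂ] lp (fun _ : ιx => ℂ) 2 where
  toLinearEquiv :=
    { toFun := fun f => star f
      map_add' := fun f g => star_add f g
      map_smul' := fun c f => by
        show star (c • f) = (starRingEnd ℂ) c • star f
        rw [starRingEnd_apply]
        exact star_smul c f
      invFun := fun f => star f
      left_inv := fun f => star_star f
      right_inv := fun f => star_star f }
  norm_map' := fun f => norm_star f

@[simp] lemma starl2_apply {ιx : Type*} (f : lp (fun _ : ιx => ℂ) 2) (t : ιx) :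
    starl2 ιx f t = (starRingEnd ℂ) (f t) := rfl

/-- Fullness of the three-valued representation.  Let `H`, `K` be complex Hilbert spaces of
dimension greater than 2, `f₁ : ℙ(H) → ℙ(K)` injective, and `f₂` a map from closed subspaces
of `K` to closed subspaces of `H` such that for every nonzero `ψ ∈ H`, closed subspace `S` of
`K`, and representative `φ` of `f₁ [ψ]`: (i) `ψ ∈ f₂ S ↔ φ ∈ S` and (ii) `ψ ⊥ f₂ S ↔ φ ⊥ S`.
(These express the Chu morphism condition after composing the evaluation with the map
`v : [0,1] → {0,1,2}` sending `0 ↦ 0`, `1 ↦ 1`, `(0,1) ↦ 2`.)  Then there is a semiunitary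
`U : H → K` — unitary (`H ≃ₗᵢ[ℂ] K`) or antiunitary (`H ≃ₛₗᵢ[starRingEnd ℂ] K`) — with
`f₁ [ψ] = [U ψ]` for every nonzero `ψ`. -/
theorem three_valued_chu_morphism_semiunitary
    {H K : Type*} [NormedAddCommGroup H] [InnerProductSpace ℂ H] [CompleteSpace H]
    [NormedAddCommGroup K] [InnerProductSpace ℂ K] [CompleteSpace K]
    (hH : Module.rank ℂ H > 2) (hK : Module.rank ℂ K > 2)
    (f₁ : Projectivization ℂ H → Projectivization ℂ K)
    (hinj : Function.Injective f₁)
    (f₂ : {S : Submodule ℂ K // IsClosed (S : Set K)} →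
          {S : Submodule ℂ H // IsClosed (S : Set H)})
    (hmem : ∀ (ψ : H) (hψ : ψ ≠ 0) (S : {S : Submodule ℂ K // IsClosed (S : Set K)})
      (φ : K) (hφ : φ ≠ 0), Projectivization.mk ℂ φ hφ = f₁ (Projectivization.mk ℂ ψ hψ) →
      (ψ ∈ (f₂ S).1 ↔ φ ∈ S.1))
    (horth : ∀ (ψ : H) (hψ : ψ ≠ 0) (S : {S : Submodule ℂ K // IsClosed (S : Set K)})
      (φ : K) (hφ : φ ≠ 0), Projectivization.mk ℂ φ hφ = f₁ (Projectivization.mk ℂ ψ hψ) →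
      (ψ ∈ ((f₂ S).1)ᗮ ↔ φ ∈ (S.1)ᗮ)) :
    (∃ U : H ≃ₗᵢ[ℂ] K, ∀ (ψ : H) (hψ : ψ ≠ 0) (hUψ : U ψ ≠ 0),
        f₁ (Projectivization.mk ℂ ψ hψ) = Projectivization.mk ℂ (U ψ) hUψ) ∨
    (∃ U : H ≃ₛₗᵢ[starRingEnd ℂ] K, ∀ (ψ : H) (hψ : ψ ≠ 0) (hUψ : U ψ ≠ 0),
        f₁ (Projectivization.mk ℂ ψ hψ) = Projectivization.mk ℂ (U ψ) hUψ) := by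
  classical
  obtain ⟨w, b, -⟩ := exists_hilbertBasis ℂ H
  obtain ⟨a, aj, ak, hab, hak, hjk⟩ := ThreeValuedAux.three_distinct b hH
  have h3 : ∃ i j k : ↥w, i ≠ j ∧ i ≠ k ∧ j ≠ k := ⟨a, aj, ak, hab, hak, hjk⟩
  have hψ₀ : (b a : H) ≠ 0 := ThreeValuedAux.b_ne_zero b a
  have hvon := ThreeValuedAux.vv_orthonormal hinj f₂ hmem horth b h3 a
  have hvcom := ThreeValuedAux.vv_complete hinj f₂ hmem horth b hψ₀ a
  let bK : HilbertBasis ↥w ℂ K := HilbertBasis.mkOfOrthogonalEqBot hvon hvcom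
  have hbK : ⇑bK = ThreeValuedAux.vv f₁ b a := HilbertBasis.coe_mkOfOrthogonalEqBot hvon hvcom
  rcases ThreeValuedAux.sig_id_or_conj hinj f₂ hmem horth b hab hak hjk with hσ | hσ
  · left
    refine ⟨b.repr.trans bK.repr.symm, ?_⟩
    intro ψ hψ hUψ
    obtain ⟨μ, hμ, hcoord⟩ := ThreeValuedAux.central hinj f₂ hmem horth b hab hak hjk hψ
    have hrepr : ∀ (y : K) (t : ↥w), bK.repr y t
        = @inner ℂ _ _ (ThreeValuedAux.vv f₁ b a t) y := by
      intro y t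
      rw [bK.repr_apply_apply]
      congr 1
      exact congrFun hbK t
    have h2 : bK.repr ((b.repr.trans bK.repr.symm) ψ) = b.repr ψ := by simp
    have hUcoord : ∀ t, @inner ℂ _ _ (ThreeValuedAux.vv f₁ b a t)
        ((b.repr.trans bK.repr.symm) ψ) = @inner ℂ _ _ (b t : H) ψ := by
      intro t
      rw [← hrepr ((b.repr.trans bK.repr.symm) ψ) t, h2, b.repr_apply_apply]
    have hFU : ThreeValuedAux.F f₁ ψ = μ • ((b.repr.trans bK.repr.symm) ψ) := by
      refine ThreeValuedAux.eq_of_inner_basis bK ?_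
      intro t
      rw [hrepr, hrepr, hcoord t, inner_smul_right, hUcoord t, hσ]
    rw [← ThreeValuedAux.mk_F (f₁ := f₁) hψ, Projectivization.mk_eq_mk_iff']
    exact ⟨μ, hFU.symm⟩
  · right
    refine ⟨(b.repr.trans (starl2 ↥w)).trans bK.repr.symm, ?_⟩
    intro ψ hψ hUψ
    obtain ⟨μ, hμ, hcoord⟩ := ThreeValuedAux.central hinj f₂ hmem horth b hab hak hjk hψ
    have hrepr : ∀ (y : K) (t : ↥w), bK.repr y t
        = @inner ℂ _ _ (ThreeValuedAux.vv f₁ b a t) y := by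
      intro y t
      rw [bK.repr_apply_apply]
      congr 1
      exact congrFun hbK t
    have h2 : bK.repr (((b.repr.trans (starl2 ↥w)).trans bK.repr.symm) ψ)
        = (starl2 ↥w) (b.repr ψ) := by simp
    have hUcoord : ∀ t, @inner ℂ _ _ (ThreeValuedAux.vv f₁ b a t)
        (((b.repr.trans (starl2 ↥w)).trans bK.repr.symm) ψ)
        = (starRingEnd ℂ) (@inner ℂ _ _ (b t : H) ψ) := by
      intro t
      rw [← hrepr (((b.repr.trans (starl2 ↥w)).trans bK.repr.symm) ψ) t, h2, starl2_apply,
        b.repr_apply_apply]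
    have hFU : ThreeValuedAux.F f₁ ψ
        = μ • (((b.repr.trans (starl2 ↥w)).trans bK.repr.symm) ψ) := by
      refine ThreeValuedAux.eq_of_inner_basis bK ?_
      intro t
      rw [hrepr, hrepr, hcoord t, inner_smul_right, hUcoord t, hσ]
    rw [← ThreeValuedAux.mk_F (f₁ := f₁) hψ, Projectivization.mk_eq_mk_iff']
    exact ⟨μ, hFU.symm⟩
end
end
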